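/- arXiv:1010.1902 — 3 statements merged into one kernel-verified Lean document; each statement's English description precedes it below -/
import Mathlib

section
/- Let f:(0,∞)→(0,∞) be measurable, bounded on compact subsets of (0,∞), and regularly varying at +∞ with index β>−1. Then Σ_{k=1}^n f(k) ∼ n f(n)/(1+β) as n→∞, i.e. lim_{n→∞} (Σ_{k=1}^n f(k))/(n f(n)) = 1/(1+β). -/
open Filter Real Topology MeasureTheory

/-- A function `f` is regularly varying at `+∞` with index `β` if for every `λ > 0`,
`f(λx)/f(x) → λ^β` as `x → +∞`. -/
def RegularlyVarying (f : ℝ → ℝ) (β : ℝ) : Prop :=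
  ∀ l : ℝ, 0 < l → Filter.Tendsto (fun x => f (l * x) / f x) Filter.atTop (nhds (l ^ β))

/-- For `0 < p ≤ 1`, `0 ≤ a ≤ b`: `p * b^(p-1) * (b-a) ≤ b^p - a^p`. -/
lemma hA' {p a b : ℝ} (hp0 : 0 < p) (hp1 : p ≤ 1) (ha : 0 ≤ a) (hab : a ≤ b) (hb : 0 < b) :
    p * b ^ (p - 1) * (b - a) ≤ b ^ p - a ^ p := by
  have hx : (a / b) ^ p ≤ 1 + p * (a / b - 1) := by
    have := rpow_one_add_le_one_add_mul_self (s := a / b - 1)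
      (by have : 0 ≤ a / b := div_nonneg ha hb.le; linarith) hp0.le hp1
    simpa using this
  have hab' : (a / b) ^ p * b ^ p = a ^ p := by
    rw [← Real.mul_rpow (div_nonneg ha hb.le) hb.le, div_mul_cancel₀ _ hb.ne']
  have hbp : (0:ℝ) < b ^ p := Real.rpow_pos_of_pos hb _
  have h2 : a ^ p ≤ (1 + p * (a / b - 1)) * b ^ p := by
    rw [← hab']; exact mul_le_mul_of_nonneg_right hx hbp.le
  have h3 : (1 + p * (a / b - 1)) * b ^ p = b ^ p - p * (b ^ p / b) * (b - a) := by
    field_simp; ring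
  have h4 : b ^ p / b = b ^ (p - 1) := by
    rw [Real.rpow_sub hb, Real.rpow_one]
  rw [h3, h4] at h2; linarith

/-- For `1 ≤ p`, `0 ≤ a ≤ b`: `b^p - a^p ≤ p * b^(p-1) * (b-a)`. -/
lemma hB' {p a b : ℝ} (hp : 1 ≤ p) (ha : 0 ≤ a) (hab : a ≤ b) (hb : 0 < b) :
    b ^ p - a ^ p ≤ p * b ^ (p - 1) * (b - a) := by
  have hx : 1 + p * (a / b - 1) ≤ (a / b) ^ p := by
    have := one_add_mul_self_le_rpow_one_add (s := a / b - 1)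
      (by have : 0 ≤ a / b := div_nonneg ha hb.le; linarith) hp
    simpa using this
  have hab' : (a / b) ^ p * b ^ p = a ^ p := by
    rw [← Real.mul_rpow (div_nonneg ha hb.le) hb.le, div_mul_cancel₀ _ hb.ne']
  have hbp : (0:ℝ) < b ^ p := Real.rpow_pos_of_pos hb _
  have h2 : (1 + p * (a / b - 1)) * b ^ p ≤ a ^ p := by
    rw [← hab']; exact mul_le_mul_of_nonneg_right hx hbp.le
  have h3 : (1 + p * (a / b - 1)) * b ^ p = b ^ p - p * (b ^ p / b) * (b - a) := by
    field_simp; ring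
  have h4 : b ^ p / b = b ^ (p - 1) := by
    rw [Real.rpow_sub hb, Real.rpow_one]
  rw [h3, h4] at h2; linarith

/-- For `0 < p ≤ 1`, `0 < a ≤ b`: `b^p - a^p ≤ p * a^(p-1) * (b-a)`. -/
lemma hC' {p a b : ℝ} (hp0 : 0 < p) (hp1 : p ≤ 1) (ha : 0 < a) (hab : a ≤ b) :
    b ^ p - a ^ p ≤ p * a ^ (p - 1) * (b - a) := by
  have hx : (b / a) ^ p ≤ 1 + p * (b / a - 1) := by
    have := rpow_one_add_le_one_add_mul_self (s := b / a - 1)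
      (by have : 0 ≤ b / a := div_nonneg (ha.le.trans hab) ha.le; linarith) hp0.le hp1
    simpa using this
  have hab' : (b / a) ^ p * a ^ p = b ^ p := by
    rw [← Real.mul_rpow (div_nonneg (ha.le.trans hab) ha.le) ha.le, div_mul_cancel₀ _ ha.ne']
  have hap : (0:ℝ) < a ^ p := Real.rpow_pos_of_pos ha _
  have h2 : b ^ p ≤ (1 + p * (b / a - 1)) * a ^ p := by
    rw [← hab']; exact mul_le_mul_of_nonneg_right hx hap.le
  have h3 : (1 + p * (b / a - 1)) * a ^ p = a ^ p + p * (a ^ p / a) * (b - a) := by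
    field_simp
  have h4 : a ^ p / a = a ^ (p - 1) := by
    rw [Real.rpow_sub ha, Real.rpow_one]
  rw [h3, h4] at h2; linarith

/-- For `1 ≤ p`, `0 < a ≤ b`: `p * a^(p-1) * (b-a) ≤ b^p - a^p`. -/
lemma hD' {p a b : ℝ} (hp : 1 ≤ p) (ha : 0 < a) (hab : a ≤ b) :
    p * a ^ (p - 1) * (b - a) ≤ b ^ p - a ^ p := by
  have hx : 1 + p * (b / a - 1) ≤ (b / a) ^ p := by
    have := one_add_mul_self_le_rpow_one_add (s := b / a - 1)
      (by have : 0 ≤ b / a := div_nonneg (ha.le.trans hab) ha.le; linarith) hp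
    simpa using this
  have hab' : (b / a) ^ p * a ^ p = b ^ p := by
    rw [← Real.mul_rpow (div_nonneg (ha.le.trans hab) ha.le) ha.le, div_mul_cancel₀ _ ha.ne']
  have hap : (0:ℝ) < a ^ p := Real.rpow_pos_of_pos ha _
  have h2 : (1 + p * (b / a - 1)) * a ^ p ≤ b ^ p := by
    rw [← hab']; exact mul_le_mul_of_nonneg_right hx hap.le
  have h3 : (1 + p * (b / a - 1)) * a ^ p = a ^ p + p * (a ^ p / a) * (b - a) := by
    field_simp
  have h4 : a ^ p / a = a ^ (p - 1) := by
    rw [Real.rpow_sub ha, Real.rpow_one]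
  rw [h3, h4] at h2; linarith

/-- Icc-to-range reindexing. -/
lemma sum_Icc_one (K : ℕ) (g : ℕ → ℝ) :
    ∑ k ∈ Finset.Icc 1 K, g k = ∑ i ∈ Finset.range K, g (i + 1) := by
  rw [← Finset.Ico_add_one_right_eq_Icc, Finset.sum_Ico_eq_sum_range]
  simp [add_comm]

/-- Telescoping upper bound for sums of negative powers. -/
lemma sum_rpow_le {γ : ℝ} (hγ0 : -1 < γ) (hγ1 : γ < 0) (n K : ℕ) (hn : 1 ≤ n) :
    ∑ k ∈ Finset.Icc 1 K, ((k : ℝ) / n) ^ γ / n ≤ ((K : ℝ) / n) ^ (1 + γ) / (1 + γ) := by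
  set p := 1 + γ with hp
  have hp0 : 0 < p := by linarith
  have hp1 : p ≤ 1 := by linarith
  have hnpos : (0:ℝ) < n := by exact_mod_cast hn
  set F : ℕ → ℝ := fun i => ((i : ℝ) / n) ^ p / p with hF
  have key2 : ∀ i : ℕ, (((i + 1 : ℕ) : ℝ) / n) ^ γ / n ≤ F (i + 1) - F i := by
    intro i
    have hb : (0:ℝ) < ((i:ℝ) + 1) / n := by positivity
    have ha : (0:ℝ) ≤ (i:ℝ) / n := by positivity
    have hab : (i:ℝ) / n ≤ ((i:ℝ)+1) / n := by
      gcongr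
      linarith
    have h := hA' hp0 hp1 ha hab hb
    have hsub : p - 1 = γ := by rw [hp]; ring
    rw [hsub] at h
    have hba : ((i:ℝ)+1)/n - (i:ℝ)/n = 1/n := by field_simp; ring
    rw [hba] at h
    have : (((i:ℝ)+1)/n) ^ γ / n ≤ ((((i:ℝ)+1)/n) ^ p - ((i:ℝ)/n) ^ p) / p := by
      rw [le_div_iff₀ hp0]
      calc (((i:ℝ)+1)/n) ^ γ / n * p = p * (((i:ℝ)+1)/n) ^ γ * (1/n) := by ring
        _ ≤ _ := h
    simpa [hF, Nat.cast_add, Nat.cast_one, div_sub_div_same] using this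
  calc ∑ k ∈ Finset.Icc 1 K, ((k : ℝ) / n) ^ γ / n
      = ∑ i ∈ Finset.range K, (((i + 1 : ℕ) : ℝ) / n) ^ γ / n := sum_Icc_one K _
    _ ≤ ∑ i ∈ Finset.range K, (F (i + 1) - F i) := Finset.sum_le_sum fun i _ => key2 i
    _ = F K - F 0 := Finset.sum_range_sub F K
    _ = ((K : ℝ) / n) ^ p / p := by
        simp [hF, Real.zero_rpow hp0.ne', zero_div]
    _ = _ := rfl

lemma riemann {β : ℝ} (hβ : -1 < β) :
    Tendsto (fun n : ℕ => ∑ k ∈ Finset.Icc 1 n, ((k : ℝ) / n) ^ β / n) atTop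
      (𝓝 (1 / (1 + β))) := by
  set p := 1 + β with hp
  have hp0 : 0 < p := by linarith
  set R : ℕ → ℝ := fun n => ∑ k ∈ Finset.Icc 1 n, ((k : ℝ) / n) ^ β / n with hR
  set u : ℕ → ℝ := fun n => (((n : ℝ) + 1) / n) ^ p / p - ((1 : ℝ) / n) ^ p / p with hu
  have hulim : Tendsto u atTop (𝓝 (1 / p)) := by
    have h1 : Tendsto (fun n : ℕ => ((n : ℝ) + 1) / n) atTop (𝓝 1) := by
      have : Tendsto (fun n : ℕ => 1 + 1 / (n : ℝ)) atTop (𝓝 (1 + 0)) :=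
        tendsto_const_nhds.add tendsto_one_div_atTop_nhds_zero_nat
      rw [add_zero] at this
      apply this.congr'
      filter_upwards [eventually_ge_atTop 1] with n hn
      have : (0:ℝ) < n := by exact_mod_cast hn
      field_simp
    have h2 : Tendsto (fun n : ℕ => (((n : ℝ) + 1) / n) ^ p) atTop (𝓝 1) := by
      have hc : ContinuousAt (fun x : ℝ => x ^ p) 1 :=
        Real.continuousAt_rpow_const 1 p (Or.inl one_ne_zero)
      have := hc.tendsto.comp h1
      simpa [Real.one_rpow, Function.comp_def] using this
    have h3 : Tendsto (fun n : ℕ => ((1 : ℝ) / n) ^ p) atTop (𝓝 0) := by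
      have hc : ContinuousAt (fun x : ℝ => x ^ p) 0 :=
        Real.continuousAt_rpow_const 0 p (Or.inr hp0.le)
      have := hc.tendsto.comp tendsto_one_div_atTop_nhds_zero_nat
      simpa [Real.zero_rpow hp0.ne', Function.comp_def] using this
    have : Tendsto u atTop (𝓝 (1 / p - 0 / p)) := ((h2.div_const p).sub (h3.div_const p))
    simpa using this
  have hlo : ∀ n : ℕ, 1 ≤ n → (if 0 ≤ β then 1 / p else u n) ≤ R n := by
    intro n hn
    have hnpos : (0:ℝ) < n := by exact_mod_cast hn
    rw [hR]
    simp only []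
    rw [sum_Icc_one n fun k => ((k : ℝ) / n) ^ β / n]
    split_ifs with hb
    · -- p ≥ 1, lower bound via F
      have hp1 : 1 ≤ p := by rw [hp]; linarith
      set F : ℕ → ℝ := fun i => ((i : ℝ) / n) ^ p / p with hF
      have key : ∀ i : ℕ, F (i + 1) - F i ≤ (((i + 1 : ℕ) : ℝ) / n) ^ β / n := by
        intro i
        have hb' : (0:ℝ) < ((i:ℝ) + 1) / n := by positivity
        have ha : (0:ℝ) ≤ (i:ℝ) / n := by positivity
        have hab : (i:ℝ) / n ≤ ((i:ℝ)+1) / n := by gcongr; linarith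
        have h := hB' hp1 ha hab hb'
        have hsub : p - 1 = β := by rw [hp]; ring
        have hba : ((i:ℝ)+1)/n - (i:ℝ)/n = 1/n := by field_simp; ring
        rw [hsub, hba] at h
        have : (((((i:ℝ)+1)/n) ^ p) - (((i:ℝ)/n) ^ p)) / p ≤ (((i:ℝ)+1)/n) ^ β / n := by
          rw [div_le_iff₀ hp0] at *
          calc ((((i:ℝ)+1)/n) ^ p) - (((i:ℝ)/n) ^ p)
              ≤ p * ((((i:ℝ)+1)/n) ^ β) * (1/n) := h
            _ = (((i:ℝ)+1)/n) ^ β / n * p := by ring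
        · simpa [hF, div_sub_div_same] using this
      calc (1:ℝ) / p = F n - F 0 := by
            simp [hF, div_self hnpos.ne', Real.one_rpow, Real.zero_rpow hp0.ne', zero_div]
        _ = ∑ i ∈ Finset.range n, (F (i + 1) - F i) := (Finset.sum_range_sub F n).symm
        _ ≤ _ := Finset.sum_le_sum fun i _ => key i
    · -- β < 0 : lower bound via G
      push_neg at hb
      have hp1 : p ≤ 1 := by rw [hp]; linarith
      set G : ℕ → ℝ := fun i => (((i : ℝ) + 1) / n) ^ p / p with hG
      have key : ∀ i : ℕ, G (i + 1) - G i ≤ (((i + 1 : ℕ) : ℝ) / n) ^ β / n := by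
        intro i
        have ha : (0:ℝ) < ((i:ℝ) + 1) / n := by positivity
        have hab : ((i:ℝ)+1) / n ≤ ((i:ℝ)+2) / n := by gcongr; linarith
        have h := hC' hp0 hp1 ha hab
        have hsub : p - 1 = β := by rw [hp]; ring
        have hba : ((i:ℝ)+2)/n - ((i:ℝ)+1)/n = 1/n := by field_simp; ring
        rw [hsub, hba] at h
        have : (((((i:ℝ)+2)/n) ^ p) - ((((i:ℝ)+1)/n) ^ p)) / p ≤ (((i:ℝ)+1)/n) ^ β / n := by
          rw [div_le_iff₀ hp0] at *
          calc ((((i:ℝ)+2)/n) ^ p) - ((((i:ℝ)+1)/n) ^ p)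
              ≤ p * ((((i:ℝ)+1)/n) ^ β) * (1/n) := h
            _ = (((i:ℝ)+1)/n) ^ β / n * p := by ring
        have hcast : (((i:ℝ)+1)+1) = (i:ℝ)+2 := by ring
        simpa [hG, div_sub_div_same, hcast] using this
      calc u n = G n - G 0 := by simp [hG, hu]
        _ = ∑ i ∈ Finset.range n, (G (i + 1) - G i) := (Finset.sum_range_sub G n).symm
        _ ≤ _ := Finset.sum_le_sum fun i _ => key i
  have hhi : ∀ n : ℕ, 1 ≤ n → R n ≤ (if 0 ≤ β then u n else 1 / p) := by
    intro n hn
    have hnpos : (0:ℝ) < n := by exact_mod_cast hn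
    rw [hR]
    simp only []
    split_ifs with hb
    · -- p ≥ 1, upper bound via G
      have hp1 : 1 ≤ p := by rw [hp]; linarith
      rw [sum_Icc_one n fun k => ((k : ℝ) / n) ^ β / n]
      set G : ℕ → ℝ := fun i => (((i : ℝ) + 1) / n) ^ p / p with hG
      have key : ∀ i : ℕ, (((i + 1 : ℕ) : ℝ) / n) ^ β / n ≤ G (i + 1) - G i := by
        intro i
        have ha : (0:ℝ) < ((i:ℝ) + 1) / n := by positivity
        have hab : ((i:ℝ)+1) / n ≤ ((i:ℝ)+2) / n := by gcongr; linarith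
        have h := hD' hp1 ha hab
        have hsub : p - 1 = β := by rw [hp]; ring
        have hba : ((i:ℝ)+2)/n - ((i:ℝ)+1)/n = 1/n := by field_simp; ring
        rw [hsub, hba] at h
        have : (((i:ℝ)+1)/n) ^ β / n ≤ (((((i:ℝ)+2)/n) ^ p) - ((((i:ℝ)+1)/n) ^ p)) / p := by
          rw [le_div_iff₀ hp0]
          calc (((i:ℝ)+1)/n) ^ β / n * p = p * ((((i:ℝ)+1)/n) ^ β) * (1/n) := by ring
            _ ≤ _ := h
        have hcast : (((i:ℝ)+1)+1) = (i:ℝ)+2 := by ring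
        simpa [hG, div_sub_div_same, hcast] using this
      calc ∑ i ∈ Finset.range n, (((i + 1 : ℕ) : ℝ) / n) ^ β / n
          ≤ ∑ i ∈ Finset.range n, (G (i + 1) - G i) := Finset.sum_le_sum fun i _ => key i
        _ = G n - G 0 := Finset.sum_range_sub G n
        _ = u n := by simp [hG, hu]
    · push_neg at hb
      have h := sum_rpow_le hβ hb n n hn
      calc ∑ k ∈ Finset.Icc 1 n, ((k : ℝ) / n) ^ β / n
          ≤ ((n : ℝ) / n) ^ (1 + β) / (1 + β) := h
        _ = 1 / p := by rw [div_self hnpos.ne', Real.one_rpow]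
  -- squeeze
  rcases le_or_gt 0 β with hb | hb
  · have h1 : ∀ᶠ n in atTop, (1:ℝ) / p ≤ R n := by
      filter_upwards [eventually_ge_atTop 1] with n hn
      simpa [if_pos hb] using hlo n hn
    have h2 : ∀ᶠ n in atTop, R n ≤ u n := by
      filter_upwards [eventually_ge_atTop 1] with n hn
      simpa [if_pos hb] using hhi n hn
    exact tendsto_of_tendsto_of_tendsto_of_le_of_le' tendsto_const_nhds hulim h1 h2
  · have h1 : ∀ᶠ n in atTop, u n ≤ R n := by
      filter_upwards [eventually_ge_atTop 1] with n hn
      simpa [if_neg (not_le.mpr hb)] using hlo n hn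
    have h2 : ∀ᶠ n in atTop, R n ≤ 1 / p := by
      filter_upwards [eventually_ge_atTop 1] with n hn
      simpa [if_neg (not_le.mpr hb)] using hhi n hn
    exact tendsto_of_tendsto_of_tendsto_of_le_of_le' hulim tendsto_const_nhds h1 h2

lemma uct_add {h : ℝ → ℝ} {β : ℝ} (hmeash : Measurable h)
    (hpt : ∀ u : ℝ, Tendsto (fun y => h (y + u) - h y) atTop (𝓝 (β * u)))
    {ε c d : ℝ} (hε : 0 < ε) (hcd : c ≤ d) :
    ∀ᶠ y in atTop, ∀ u ∈ Set.Icc c d, |h (y + u) - h y - β * u| ≤ ε := by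
  by_contra H
  have hfreq : ∀ b : ℝ, ∃ x ≥ b, ¬ ∀ u ∈ Set.Icc c d, |h (x + u) - h x - β * u| ≤ ε :=
    frequently_atTop.mp (not_eventually.mp H)
  choose y hyge hbad using fun n : ℕ => hfreq n
  have hbad' : ∀ n : ℕ, ∃ u ∈ Set.Icc c d, ε < |h (y n + u) - h (y n) - β * u| := by
    intro n; have := hbad n; push_neg at this; exact this
  choose u humem hugt using hbad'
  have hytop : Tendsto y atTop atTop :=
    tendsto_atTop_mono hyge tendsto_natCast_atTop_atTop
  have hztop : Tendsto (fun n => y n + u n) atTop atTop := by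
    apply tendsto_atTop_mono (fun n => ?_)
      (tendsto_atTop_add_const_right atTop c tendsto_natCast_atTop_atTop)
    exact add_le_add (hyge n) (humem n).1
  set δ := ε / 3 with hδ
  have hδpos : 0 < δ := by positivity
  -- the two families of good sets
  set V : ℕ → Set ℝ := fun n => {t | ∀ m, n ≤ m → |h (y m + t) - h (y m) - β * t| ≤ δ} with hV
  set W : ℕ → Set ℝ := fun n =>
    {t | ∀ m, n ≤ m → |h (y m + u m + t) - h (y m + u m) - β * t| ≤ δ} with hW
  have hmeasg : ∀ a : ℝ, Measurable fun t : ℝ => |h (a + t) - h a - β * t| := by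
    intro a
    exact (((hmeash.comp (measurable_id.const_add a)).sub measurable_const).sub
      (measurable_id.const_mul β)).abs
  have hVmeas : ∀ n, MeasurableSet (V n) := by
    intro n
    have : V n = ⋂ m, ⋂ _ : n ≤ m, {t | |h (y m + t) - h (y m) - β * t| ≤ δ} := by
      ext t; simp [hV, Set.mem_iInter]
    rw [this]
    exact MeasurableSet.iInter fun m => MeasurableSet.iInter fun _ =>
      measurableSet_le (hmeasg (y m)) measurable_const
  have hWmeas : ∀ n, MeasurableSet (W n) := by
    intro n
    have : W n = ⋂ m, ⋂ _ : n ≤ m, {t | |h (y m + u m + t) - h (y m + u m) - β * t| ≤ δ} := by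
      ext t; simp [hW, Set.mem_iInter]
    rw [this]
    exact MeasurableSet.iInter fun m => MeasurableSet.iInter fun _ =>
      measurableSet_le (hmeasg (y m + u m)) measurable_const
  have hVmono : Monotone V := fun a b hab t ht m hm => ht m (hab.trans hm)
  have hWmono : Monotone W := fun a b hab t ht m hm => ht m (hab.trans hm)
  have hVunion : ∀ t : ℝ, ∃ n, t ∈ V n := by
    intro t
    have h1 : Tendsto (fun m => h (y m + t) - h (y m)) atTop (𝓝 (β * t)) :=
      (hpt t).comp hytop
    have h2 : ∀ᶠ m in atTop, |h (y m + t) - h (y m) - β * t| ≤ δ := by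
      have := Metric.tendsto_atTop.mp h1 δ hδpos
      obtain ⟨N, hN⟩ := this
      filter_upwards [eventually_ge_atTop N] with m hm
      have := hN m hm
      rw [Real.dist_eq] at this
      linarith [le_of_lt this]
    obtain ⟨N, hN⟩ := eventually_atTop.mp h2
    exact ⟨N, fun m hm => hN m hm⟩
  have hWunion : ∀ t : ℝ, ∃ n, t ∈ W n := by
    intro t
    have h1 : Tendsto (fun m => h (y m + u m + t) - h (y m + u m)) atTop (𝓝 (β * t)) :=
      (hpt t).comp hztop
    have h2 : ∀ᶠ m in atTop, |h (y m + u m + t) - h (y m + u m) - β * t| ≤ δ := by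
      have := Metric.tendsto_atTop.mp h1 δ hδpos
      obtain ⟨N, hN⟩ := this
      filter_upwards [eventually_ge_atTop N] with m hm
      have := hN m hm
      rw [Real.dist_eq] at this
      linarith [le_of_lt this]
    obtain ⟨N, hN⟩ := eventually_atTop.mp h2
    exact ⟨N, fun m hm => hN m hm⟩
  -- measure argument
  set I : Set ℝ := Set.Icc (0:ℝ) 2 with hI
  set I' : Set ℝ := Set.Icc (-(|c| + |d|)) (2 + |c| + |d|) with hI'
  have hVtend : Tendsto (fun n => volume (I \ V n)) atTop (𝓝 0) := by
    have hanti : Antitone fun n => I \ V n := fun a b hab =>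
      Set.diff_subset_diff_right (hVmono hab)
    have hinter : ⋂ n, (I \ V n) = ∅ := by
      apply Set.eq_empty_iff_forall_notMem.mpr
      intro t ht
      obtain ⟨n, hn⟩ := hVunion t
      exact (Set.mem_iInter.mp ht n).2 hn
    have := tendsto_measure_iInter_atTop (μ := volume) (s := fun n => I \ V n)
      (fun n => ((measurableSet_Icc.diff (hVmeas n)).nullMeasurableSet))
      hanti ⟨0, by
        apply ne_of_lt
        calc volume (I \ V 0) ≤ volume I := measure_mono Set.diff_subset
          _ < ⊤ := by rw [hI, Real.volume_Icc]; exact ENNReal.ofReal_lt_top⟩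
    rwa [hinter, measure_empty] at this
  have hWtend : Tendsto (fun n => volume (I' \ W n)) atTop (𝓝 0) := by
    have hanti : Antitone fun n => I' \ W n := fun a b hab =>
      Set.diff_subset_diff_right (hWmono hab)
    have hinter : ⋂ n, (I' \ W n) = ∅ := by
      apply Set.eq_empty_iff_forall_notMem.mpr
      intro t ht
      obtain ⟨n, hn⟩ := hWunion t
      exact (Set.mem_iInter.mp ht n).2 hn
    have := tendsto_measure_iInter_atTop (μ := volume) (s := fun n => I' \ W n)
      (fun n => ((measurableSet_Icc.diff (hWmeas n)).nullMeasurableSet))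
      hanti ⟨0, by
        apply ne_of_lt
        calc volume (I' \ W 0) ≤ volume I' := measure_mono Set.diff_subset
          _ < ⊤ := by rw [hI', Real.volume_Icc]; exact ENNReal.ofReal_lt_top⟩
    rwa [hinter, measure_empty] at this
  have hhalf : (0:ENNReal) < ENNReal.ofReal (1/2) := by simp
  obtain ⟨n, hVn, hWn⟩ : ∃ n, volume (I \ V n) < ENNReal.ofReal (1/2) ∧
      volume (I' \ W n) < ENNReal.ofReal (1/2) := by
    have e1 := hVtend.eventually_lt_const hhalf
    have e2 := hWtend.eventually_lt_const hhalf
    obtain ⟨n, hn⟩ := (e1.and e2).exists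
    exact ⟨n, hn.1, hn.2⟩
  -- find a good point t
  obtain ⟨t, htI, htV, htW⟩ : ∃ t ∈ I, t ∈ V n ∧ t - u n ∈ W n := by
    by_contra hcon
    push_neg at hcon
    have hsub : I ⊆ (I \ V n) ∪ ((fun t => t + (-(u n))) ⁻¹' (I' \ W n)) := by
      intro t ht
      by_cases htv : t ∈ V n
      · right
        have h1 : t - u n ∈ I' := by
          obtain ⟨ht0, ht2⟩ := ht
          obtain ⟨hu1, hu2⟩ := humem n
          constructor
          · have : -(|c| + |d|) ≤ 0 - d := by
              have := le_abs_self d; have := abs_nonneg c; linarith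
            have : 0 - d ≤ t - u n := by linarith
            linarith [ (le_abs_self d), (abs_nonneg c)]
          · have h3 : t - u n ≤ 2 - c := by linarith
            have h4 : 2 - c ≤ 2 + |c| + |d| := by
              have := neg_abs_le c; have := abs_nonneg d; linarith
            linarith
        have h2 : t - u n ∉ W n := hcon t ht htv
        simpa [sub_eq_add_neg] using Set.mem_diff_of_mem h1 h2
      · left; exact ⟨ht, htv⟩
    have hμ : volume I ≤ volume (I \ V n) + volume ((fun t => t + (-(u n))) ⁻¹' (I' \ W n)) :=
      le_trans (measure_mono hsub) (measure_union_le _ _)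
    rw [measure_preimage_add_right] at hμ
    have hlt : volume I < ENNReal.ofReal 2 := by
      calc volume I ≤ ENNReal.ofReal (1/2) + ENNReal.ofReal (1/2) :=
            le_trans hμ (add_le_add hVn.le hWn.le)
        _ = ENNReal.ofReal 1 := by rw [← ENNReal.ofReal_add] <;> norm_num
        _ < ENNReal.ofReal 2 := by
            rw [ENNReal.ofReal_lt_ofReal_iff] <;> norm_num
    rw [hI, Real.volume_Icc] at hlt
    norm_num at hlt
  -- derive the contradiction
  have hA : |h (y n + t) - h (y n) - β * t| ≤ δ := htV n le_rfl
  have hB : |h (y n + u n + (t - u n)) - h (y n + u n) - β * (t - u n)| ≤ δ := htW n le_rfl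
  have heq : y n + u n + (t - u n) = y n + t := by ring
  rw [heq] at hB
  have := hugt n
  have habs : |h (y n + u n) - h (y n) - β * u n| ≤ 2 * δ := by
    have h3 : h (y n + u n) - h (y n) - β * u n =
        (h (y n + t) - h (y n) - β * t) - (h (y n + t) - h (y n + u n) - β * (t - u n)) := by
      ring
    rw [h3]
    calc |_ - _| ≤ |h (y n + t) - h (y n) - β * t| +
          |h (y n + t) - h (y n + u n) - β * (t - u n)| := abs_sub _ _
      _ ≤ δ + δ := add_le_add hA hB
      _ = 2 * δ := by ring
  have : ε < 2 * δ := lt_of_lt_of_le (hugt n) habs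
  rw [hδ] at this
  linarith

lemma uct {f : ℝ → ℝ} (hpos : ∀ x : ℝ, 0 < x → 0 < f x) (hmeas : Measurable f)
    {β : ℝ} (hRV : RegularlyVarying f β) {ε a b : ℝ} (hε : 0 < ε) (ha : 0 < a) (hab : a ≤ b) :
    ∃ X : ℝ, 1 ≤ X ∧ ∀ x : ℝ, X ≤ x → ∀ l : ℝ, a ≤ l → l ≤ b →
      |f (l * x) / f x - l ^ β| ≤ ε := by
  set h : ℝ → ℝ := fun t => Real.log (f (Real.exp t)) with hh
  have hmeash : Measurable h := Real.measurable_log.comp (hmeas.comp Real.measurable_exp)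
  have hpt : ∀ u : ℝ, Tendsto (fun y => h (y + u) - h y) atTop (𝓝 (β * u)) := by
    intro u
    have h1 : Tendsto (fun x => f (Real.exp u * x) / f x) atTop (𝓝 (Real.exp u ^ β)) :=
      hRV (Real.exp u) (Real.exp_pos u)
    have h2 : Tendsto (fun y : ℝ => f (Real.exp u * Real.exp y) / f (Real.exp y)) atTop
        (𝓝 (Real.exp u ^ β)) := h1.comp Real.tendsto_exp_atTop
    have h3 : Tendsto (fun y : ℝ => Real.log (f (Real.exp u * Real.exp y) / f (Real.exp y)))
        atTop (𝓝 (Real.log (Real.exp u ^ β))) :=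
      ((Real.continuousAt_log (ne_of_gt (Real.rpow_pos_of_pos (Real.exp_pos u) β))).tendsto).comp
        h2
    have h4 : Real.log (Real.exp u ^ β) = β * u := by
      rw [Real.log_rpow (Real.exp_pos u), Real.log_exp]
    rw [h4] at h3
    apply h3.congr
    intro y
    have he : Real.exp u * Real.exp y = Real.exp (y + u) := by
      rw [← Real.exp_add]; ring_nf
    rw [he, Real.log_div (hpos _ (Real.exp_pos _)).ne' (hpos _ (Real.exp_pos _)).ne']
  set M : ℝ := max (a ^ β) (b ^ β) with hM
  have hMpos : 0 < M := lt_of_lt_of_le (Real.rpow_pos_of_pos ha β) (le_max_left _ _)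
  set δ' : ℝ := Real.log (1 + ε / M) with hδ'
  have hδpos : 0 < δ' := Real.log_pos (by
    have : 0 < ε / M := div_pos hε hMpos
    linarith)
  have hcd : Real.log a ≤ Real.log b := Real.log_le_log ha hab
  obtain ⟨y₀, hy₀⟩ := eventually_atTop.mp (uct_add hmeash hpt hδpos hcd)
  refine ⟨max 1 (Real.exp y₀), le_max_left _ _, fun x hx l hal hlb => ?_⟩
  have hxpos : (0:ℝ) < x := lt_of_lt_of_le one_pos (le_trans (le_max_left _ _) hx)
  have hlpos : 0 < l := lt_of_lt_of_le ha hal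
  set y := Real.log x with hy
  have hyy : y₀ ≤ y := by
    rw [hy, ← Real.log_exp y₀]
    exact Real.log_le_log (Real.exp_pos _) (le_trans (le_max_right _ _) hx)
  set u := Real.log l with hu'
  have humem : u ∈ Set.Icc (Real.log a) (Real.log b) :=
    ⟨Real.log_le_log ha hal, Real.log_le_log hlpos hlb⟩
  have hr := hy₀ y hyy u humem
  -- identify the quantities
  have hid1 : h (y + u) = Real.log (f (l * x)) := by
    rw [hh]; simp only []
    congr 1
    rw [Real.exp_add, Real.exp_log hxpos, Real.exp_log hlpos]
    ring
  have hid2 : h y = Real.log (f x) := by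
    rw [hh]; simp only []
    congr 2
    exact Real.exp_log hxpos
  have hflx : 0 < f (l * x) := hpos _ (by positivity)
  have hfx : 0 < f x := hpos _ hxpos
  have hratio : f (l * x) / f x = Real.exp (h (y + u) - h y) := by
    rw [hid1, hid2, Real.exp_sub, Real.exp_log hflx, Real.exp_log hfx]
  have hlβ : l ^ β = Real.exp (β * u) := by
    rw [Real.rpow_def_of_pos hlpos, hu']; ring_nf
  set r := h (y + u) - h y - β * u with hr'
  have hrabs : |r| ≤ δ' := hr
  have key : f (l * x) / f x - l ^ β = Real.exp (β * u) * (Real.exp r - 1) := by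
    rw [hratio, hlβ, mul_sub, mul_one, ← Real.exp_add]
    congr 2
    rw [hr']; ring
  rw [key, abs_mul, abs_of_pos (Real.exp_pos _)]
  have hexpβu : Real.exp (β * u) ≤ M := by
    rw [← hlβ]
    rcases le_or_gt 0 β with hb | hb
    · exact le_trans (Real.rpow_le_rpow hlpos.le hlb hb) (le_max_right _ _)
    · exact le_trans (Real.rpow_le_rpow_of_nonpos ha hal hb.le) (le_max_left _ _)
  have hexp1 : |Real.exp r - 1| ≤ Real.exp δ' - 1 := by
    rcases le_or_gt 1 (Real.exp r) with h1 | h1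
    · rw [abs_of_nonneg (by linarith)]
      have := Real.exp_le_exp.mpr (le_trans (le_abs_self r) hrabs)
      linarith
    · rw [abs_of_neg (by linarith)]
      have h2 : -δ' ≤ r := by
        have := neg_abs_le r; linarith
      have h3 := Real.exp_le_exp.mpr h2
      have h4 := Real.add_one_le_exp (-δ')
      have h5 := Real.add_one_le_exp δ'
      have h6 : Real.exp (-δ') = (Real.exp δ')⁻¹ := Real.exp_neg δ'
      have h7 : 1 - Real.exp (-δ') ≤ Real.exp δ' - 1 := by
        rw [h6]
        have hp := Real.exp_pos δ'
        have hinv : Real.exp δ' * (Real.exp δ')⁻¹ = 1 := mul_inv_cancel₀ hp.ne'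
        nlinarith [sq_nonneg (Real.exp δ' - 1), hp, inv_pos.mpr hp]
      linarith
  have hlog : Real.exp δ' - 1 = ε / M := by
    rw [hδ', Real.exp_log (by positivity : (0:ℝ) < 1 + ε / M)]; ring
  calc Real.exp (β * u) * |Real.exp r - 1| ≤ M * (ε / M) := by
        apply mul_le_mul hexpβu (by rw [← hlog]; exact hexp1) (abs_nonneg _) hMpos.le
    _ = ε := by field_simp

lemma potter {f : ℝ → ℝ} (hpos : ∀ x : ℝ, 0 < x → 0 < f x) (hmeas : Measurable f)
    {β : ℝ} (hRV : RegularlyVarying f β) {γ : ℝ} (hγβ : γ < β) (hγ0 : γ < 0) :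
    ∃ X C : ℝ, 1 ≤ X ∧ 0 < C ∧ ∀ k n : ℝ, X ≤ k → k ≤ n →
      f k ≤ C * (k / n) ^ γ * f n := by
  set c0 : ℝ := min 1 ((2:ℝ) ^ β) / 2 with hc0
  have hc0pos : 0 < c0 := by
    rw [hc0]
    have : (0:ℝ) < (2:ℝ) ^ β := Real.rpow_pos_of_pos two_pos β
    have : (0:ℝ) < min 1 ((2:ℝ) ^ β) := lt_min one_pos this
    linarith
  have h2γβ : (2:ℝ) ^ γ < (2:ℝ) ^ β := Real.rpow_lt_rpow_left_iff one_lt_two |>.mpr hγβ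
  set η : ℝ := min c0 ((2:ℝ) ^ β - (2:ℝ) ^ γ) with hη
  have hηpos : 0 < η := lt_min hc0pos (by linarith)
  obtain ⟨X, hX1, hXuct⟩ := uct hpos hmeas hRV hηpos one_pos one_le_two
  refine ⟨X, 1 / c0, hX1, by positivity, fun k n hXk hkn => ?_⟩
  have hkpos : 0 < k := lt_of_lt_of_le one_pos (hX1.trans hXk)
  have hnpos : 0 < n := lt_of_lt_of_le hkpos hkn
  -- doubling bound
  have hdouble : ∀ x : ℝ, X ≤ x → (2:ℝ) ^ γ * f x ≤ f (2 * x) := by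
    intro x hx
    have hxpos : 0 < x := lt_of_lt_of_le one_pos (hX1.trans hx)
    have := hXuct x hx 2 one_le_two le_rfl
    have hfx := hpos x hxpos
    have h1 : (2:ℝ) ^ β - η ≤ f (2 * x) / f x := by
      have := abs_le.mp this; linarith [this.1]
    have h2 : (2:ℝ) ^ γ ≤ f (2 * x) / f x := by
      have : η ≤ (2:ℝ) ^ β - (2:ℝ) ^ γ := min_le_right _ _
      linarith
    calc (2:ℝ) ^ γ * f x ≤ f (2 * x) / f x * f x :=
          mul_le_mul_of_nonneg_right h2 hfx.le
      _ = f (2 * x) := div_mul_cancel₀ _ hfx.ne'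
  -- base bound
  have hbase : ∀ x : ℝ, X ≤ x → ∀ l : ℝ, 1 ≤ l → l ≤ 2 → c0 * f x ≤ f (l * x) := by
    intro x hx l h1l hl2
    have hxpos : 0 < x := lt_of_lt_of_le one_pos (hX1.trans hx)
    have hfx := hpos x hxpos
    have := hXuct x hx l h1l hl2
    have hlβ : min 1 ((2:ℝ) ^ β) ≤ l ^ β := by
      rcases le_or_gt 0 β with hb | hb
      · calc min 1 ((2:ℝ) ^ β) ≤ 1 := min_le_left _ _
          _ = (1:ℝ) ^ β := (Real.one_rpow β).symm
          _ ≤ l ^ β := Real.rpow_le_rpow zero_le_one h1l hb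
      · calc min 1 ((2:ℝ) ^ β) ≤ (2:ℝ) ^ β := min_le_right _ _
          _ ≤ l ^ β := Real.rpow_le_rpow_of_nonpos (lt_of_lt_of_le one_pos h1l) hl2 hb.le
    have h1 : l ^ β - η ≤ f (l * x) / f x := by
      have := abs_le.mp this; linarith [this.1]
    have h2 : c0 ≤ f (l * x) / f x := by
      have hη1 : η ≤ c0 := min_le_left _ _
      have : 2 * c0 = min 1 ((2:ℝ) ^ β) := by rw [hc0]; ring
      linarith
    calc c0 * f x ≤ f (l * x) / f x * f x := mul_le_mul_of_nonneg_right h2 hfx.le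
      _ = f (l * x) := div_mul_cancel₀ _ hfx.ne'
  -- chain bound
  have hchain : ∀ m : ℕ, ∀ x : ℝ, X ≤ x → ((2:ℝ) ^ γ) ^ m * f x ≤ f ((2:ℝ) ^ m * x) := by
    intro m
    induction m with
    | zero => intro x hx; simp
    | succ m ih =>
      intro x hx
      have hxpos : 0 < x := lt_of_lt_of_le one_pos (hX1.trans hx)
      have h2m : (1:ℝ) ≤ (2:ℝ) ^ m := one_le_pow₀ one_le_two
      have hx2m : X ≤ (2:ℝ) ^ m * x := le_trans hx (le_mul_of_one_le_left hxpos.le h2m)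
      have h1 := hdouble _ hx2m
      have h2 := ih x hx
      have h2γpos : (0:ℝ) < (2:ℝ) ^ γ := Real.rpow_pos_of_pos two_pos γ
      calc ((2:ℝ) ^ γ) ^ (m+1) * f x = (2:ℝ) ^ γ * (((2:ℝ) ^ γ) ^ m * f x) := by ring
        _ ≤ (2:ℝ) ^ γ * f ((2:ℝ) ^ m * x) := by
            exact mul_le_mul_of_nonneg_left h2 h2γpos.le
        _ ≤ f (2 * ((2:ℝ) ^ m * x)) := h1
        _ = f ((2:ℝ) ^ (m+1) * x) := by ring_nf
  -- choose m
  set r : ℝ := n / k with hrdef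
  have hr1 : 1 ≤ r := (one_le_div hkpos).mpr hkn
  have hrpos : 0 < r := lt_of_lt_of_le one_pos hr1
  set m : ℕ := ⌊Real.logb 2 r⌋₊ with hm
  have hlognn : 0 ≤ Real.logb 2 r := Real.logb_nonneg one_lt_two hr1
  have hPle : (2:ℝ) ^ m ≤ r := by
    have h1 : (m:ℝ) ≤ Real.logb 2 r := Nat.floor_le hlognn
    calc (2:ℝ) ^ m = (2:ℝ) ^ (m:ℝ) := by rw [Real.rpow_natCast]
      _ ≤ (2:ℝ) ^ Real.logb 2 r := Real.rpow_le_rpow_of_exponent_le one_le_two h1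
      _ = r := Real.rpow_logb two_pos (by norm_num) hrpos
  have hrlt : r < 2 * (2:ℝ) ^ m := by
    have h1 : Real.logb 2 r < m + 1 := Nat.lt_floor_add_one _
    calc r = (2:ℝ) ^ Real.logb 2 r := (Real.rpow_logb two_pos (by norm_num) hrpos).symm
      _ < (2:ℝ) ^ ((m:ℝ) + 1) := Real.rpow_lt_rpow_of_exponent_lt one_lt_two h1
      _ = 2 * (2:ℝ) ^ m := by
          rw [Real.rpow_add two_pos, Real.rpow_one, Real.rpow_natCast]; ring
  set P : ℝ := (2:ℝ) ^ m with hPdef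
  have hPpos : (0:ℝ) < P := by positivity
  set l : ℝ := n / (P * k) with hldef
  have hl1 : 1 ≤ l := by
    rw [hldef, le_div_iff₀ (by positivity), one_mul]
    calc P * k ≤ r * k := mul_le_mul_of_nonneg_right hPle hkpos.le
      _ = n := by rw [hrdef]; field_simp
  have hl2 : l ≤ 2 := by
    rw [hldef, div_le_iff₀ (by positivity)]
    calc n = r * k := by rw [hrdef]; field_simp
      _ ≤ 2 * P * k := by
          apply mul_le_mul_of_nonneg_right _ hkpos.le
          linarith
      _ = 2 * (P * k) := by ring
  have hPkX : X ≤ P * k := le_trans hXk (le_mul_of_one_le_left hkpos.le (one_le_pow₀ one_le_two))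
  have step1 : c0 * f (P * k) ≤ f n := by
    have := hbase (P * k) hPkX l hl1 hl2
    have hln : l * (P * k) = n := by rw [hldef]; field_simp
    rwa [hln] at this
  have step2 : ((2:ℝ) ^ γ) ^ m * f k ≤ f (P * k) := hchain m k hXk
  have hfk := hpos k hkpos
  have hfn := hpos n hnpos
  set Q : ℝ := ((2:ℝ) ^ γ) ^ m with hQdef
  have hQpos : 0 < Q := pow_pos (Real.rpow_pos_of_pos two_pos γ) m
  have hQr : r ^ γ ≤ Q := by
    have hPγ : P ^ γ = Q := by
      rw [hPdef, hQdef, ← Real.rpow_natCast (2:ℝ) m, ← Real.rpow_natCast ((2:ℝ)^γ) m,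
        ← Real.rpow_mul (by norm_num : (0:ℝ) ≤ 2), ← Real.rpow_mul (by norm_num : (0:ℝ) ≤ 2)]
      ring_nf
    rw [← hPγ]
    exact Real.rpow_le_rpow_of_nonpos hPpos hPle hγ0.le
  have hkn_γ : Q⁻¹ ≤ (k / n) ^ γ := by
    have h1 : (k / n) ^ γ = (r ^ γ)⁻¹ := by
      rw [hrdef, ← Real.inv_rpow (by positivity : (0:ℝ) ≤ n / k)]
      congr 1
      field_simp
    rw [h1]
    exact inv_anti₀ (Real.rpow_pos_of_pos hrpos γ) hQr
  have hcomb : c0 * Q * f k ≤ f n := by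
    calc c0 * Q * f k = c0 * (Q * f k) := by ring
      _ ≤ c0 * f (P * k) := mul_le_mul_of_nonneg_left step2 hc0pos.le
      _ ≤ f n := step1
  calc f k = (c0 * Q)⁻¹ * (c0 * Q * f k) := by field_simp
    _ ≤ (c0 * Q)⁻¹ * f n := by
        apply mul_le_mul_of_nonneg_left hcomb (by positivity)
    _ = (1 / c0) * Q⁻¹ * f n := by rw [mul_inv]; ring
    _ ≤ (1 / c0) * (k / n) ^ γ * f n := by
        apply mul_le_mul_of_nonneg_right _ hfn.le
        apply mul_le_mul_of_nonneg_left hkn_γ (by positivity)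

lemma nfn_atTop {f : ℝ → ℝ} (hpos : ∀ x : ℝ, 0 < x → 0 < f x) {γ X C : ℝ}
    (hX1 : 1 ≤ X) (hCpos : 0 < C) (hγ1 : -1 < γ)
    (hpott : ∀ k n : ℝ, X ≤ k → k ≤ n → f k ≤ C * (k / n) ^ γ * f n) :
    Tendsto (fun n : ℕ => (n : ℝ) * f n) atTop atTop := by
  have hXpos : (0:ℝ) < X := lt_of_lt_of_le one_pos hX1
  have hfX : 0 < f X := hpos X hXpos
  have hXγ : (0:ℝ) < X ^ γ := Real.rpow_pos_of_pos hXpos γ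
  set c₁ : ℝ := f X / (C * X ^ γ) with hc₁
  have hc₁pos : 0 < c₁ := by positivity
  have h1 : Tendsto (fun n : ℕ => (n : ℝ) ^ (1 + γ)) atTop atTop :=
    (tendsto_rpow_atTop (by linarith)).comp tendsto_natCast_atTop_atTop
  have h2 : Tendsto (fun n : ℕ => c₁ * (n : ℝ) ^ (1 + γ)) atTop atTop :=
    h1.const_mul_atTop hc₁pos
  apply tendsto_atTop_mono' atTop _ h2
  filter_upwards [eventually_ge_atTop ⌈X⌉₊] with n hn
  set N : ℝ := (n : ℝ) with hN
  have hXN : X ≤ N := le_trans (Nat.le_ceil X) (by rw [hN]; exact_mod_cast hn)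
  have hNpos : 0 < N := lt_of_lt_of_le hXpos hXN
  have hNγ : (0:ℝ) < N ^ γ := Real.rpow_pos_of_pos hNpos γ
  have hfN : 0 < f N := hpos N hNpos
  have h := hpott X N le_rfl hXN
  have hdiv : (X / N) ^ γ = X ^ γ / N ^ γ := Real.div_rpow hXpos.le hNpos.le γ
  rw [hdiv] at h
  have h' : f X ≤ (C * X ^ γ * f N) / N ^ γ := by
    calc f X ≤ C * (X ^ γ / N ^ γ) * f N := h
      _ = (C * X ^ γ * f N) / N ^ γ := by ring
  have key : f X * N ^ γ ≤ C * X ^ γ * f N := (le_div_iff₀ hNγ).mp h'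
  have hstep : c₁ * N ^ γ ≤ f N := by
    rw [hc₁, div_mul_eq_mul_div, div_le_iff₀ (by positivity)]
    calc f X * N ^ γ ≤ C * X ^ γ * f N := key
      _ = f N * (C * X ^ γ) := by ring
  have hpow : N ^ (1 + γ) = N * N ^ γ := by
    rw [Real.rpow_add hNpos, Real.rpow_one]
  calc c₁ * N ^ (1 + γ) = N * (c₁ * N ^ γ) := by rw [hpow]; ring
    _ ≤ N * f N := mul_le_mul_of_nonneg_left hstep hNpos.le

set_option maxHeartbeats 1000000 in
/-- Discrete version of Karamata's theorem: if `f` is regularly varying with index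
`β > -1`, then `Σ_{k=1}^n f(k) ∼ n f(n)/(1+β)` as `n → ∞`. -/
theorem karamata_discrete
    (f : ℝ → ℝ) (hpos : ∀ x : ℝ, 0 < x → 0 < f x)
    (hmeas : Measurable f)
    (hbdd : ∀ K : Set ℝ, K ⊆ Set.Ioi 0 → IsCompact K → ∃ M : ℝ, ∀ x ∈ K, f x ≤ M)
    (β : ℝ) (hβ : -1 < β) (hRV : RegularlyVarying f β) :
    Filter.Tendsto (fun n : ℕ => (∑ k ∈ Finset.Icc 1 n, f k) / ((n : ℝ) * f n))
      Filter.atTop (nhds (1 / (1 + β))) := by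
  set γ : ℝ := (min β 0 - 1) / 2 with hγdef
  have hγβ : γ < β := by
    rcases le_or_gt β 0 with h | h
    · rw [hγdef, min_eq_left h]; linarith
    · rw [hγdef, min_eq_right h.le]; linarith
  have hγ0 : γ < 0 := by
    rcases le_or_gt β 0 with h | h
    · rw [hγdef, min_eq_left h]; linarith
    · rw [hγdef, min_eq_right h.le]; linarith
  have hγ1 : -1 < γ := by
    rcases le_or_gt β 0 with h | h
    · rw [hγdef, min_eq_left h]; linarith
    · rw [hγdef, min_eq_right h.le]; linarith
  set p : ℝ := 1 + γ with hpdef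
  have hp0 : 0 < p := by rw [hpdef]; linarith
  clear_value γ
  obtain ⟨X, C, hX1, hCpos, hpott⟩ := potter hpos hmeas hRV hγβ hγ0
  have hnfn := nfn_atTop hpos hX1 hCpos hγ1 hpott
  set L : ℝ := 1 / (1 + β) with hLdef
  rw [Metric.tendsto_atTop]
  intro ε hε
  have hε5 : 0 < ε / 5 := by linarith
  -- choose δ
  set t₀ : ℝ := ε / 5 * p / (C + 1) with ht₀
  have ht₀pos : 0 < t₀ := by positivity
  set δ : ℝ := min 1 (t₀ ^ p⁻¹) with hδdef
  have hδpos : 0 < δ := lt_min one_pos (Real.rpow_pos_of_pos ht₀pos _)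
  have hδ1 : δ ≤ 1 := min_le_left _ _
  have hδbound : (C + 1) * δ ^ p / p ≤ ε / 5 := by
    have h1 : δ ^ p ≤ t₀ := by
      calc δ ^ p ≤ (t₀ ^ p⁻¹) ^ p :=
            Real.rpow_le_rpow hδpos.le (min_le_right _ _) hp0.le
        _ = t₀ := Real.rpow_inv_rpow ht₀pos.le hp0.ne'
    calc (C + 1) * δ ^ p / p ≤ (C + 1) * t₀ / p := by
          exact div_le_div_of_nonneg_right (mul_le_mul_of_nonneg_left h1 (by positivity)) hp0.le
      _ = ε / 5 := by rw [ht₀]; field_simp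
  clear_value t₀ δ
  -- the uniform bound on [δ, 1]
  clear_value p
  obtain ⟨Xu, hXu1, hXuct⟩ := uct hpos hmeas hRV hε5 hδpos hδ1
  -- constant for small k
  set X' : ℕ := ⌈X⌉₊ with hX'
  set cT : ℝ := ∑ k ∈ Finset.Icc 1 X', f k with hcT
  have hcTnn : 0 ≤ cT := Finset.sum_nonneg fun k hk => by
    have : 1 ≤ k := (Finset.mem_Icc.mp hk).1
    exact (hpos _ (by exact_mod_cast this : (0:ℝ) < k)).le
  have hXX' : X ≤ (X' : ℝ) := by rw [hX']; exact Nat.le_ceil X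
  clear_value X' cT
  -- eventual bounds
  have E3 : ∀ᶠ n : ℕ in atTop, cT / ((n : ℝ) * f n) ≤ ε / 5 := by
    filter_upwards [hnfn.eventually_ge_atTop (max 1 (cT / (ε / 5))),
      eventually_ge_atTop 1] with n hn hn1
    have hNpos : (0:ℝ) < n := by exact_mod_cast hn1
    have hfn : 0 < f n := hpos _ hNpos
    have hprod : 0 < (n:ℝ) * f n := mul_pos hNpos hfn
    rw [div_le_iff₀ hprod]
    calc cT ≤ cT / (ε / 5) * (ε / 5) := by field_simp; exact le_rfl
      _ ≤ (n : ℝ) * f n * (ε / 5) := by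
          apply mul_le_mul_of_nonneg_right _ hε5.le
          exact le_trans (le_max_right _ _) hn
      _ = ε / 5 * ((n:ℝ) * f n) := by ring
  have E4 : ∀ᶠ n : ℕ in atTop,
      |(∑ k ∈ Finset.Icc 1 n, ((k : ℝ) / n) ^ β / n) - L| ≤ ε / 5 := by
    obtain ⟨N₀, hN₀⟩ := Metric.tendsto_atTop.mp (riemann hβ) (ε/5) hε5
    filter_upwards [eventually_ge_atTop N₀] with n hn
    have := hN₀ n hn
    rw [Real.dist_eq] at this
    exact this.le
  have E2 : ∀ᶠ n : ℕ in atTop, Xu ≤ (n : ℝ) := by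
    filter_upwards [eventually_ge_atTop ⌈Xu⌉₊] with n hn
    exact le_trans (Nat.le_ceil Xu) (by exact_mod_cast hn)
  rw [eventually_atTop] at E3 E4 E2
  obtain ⟨N3, hN3⟩ := E3; obtain ⟨N4, hN4⟩ := E4; obtain ⟨N2, hN2⟩ := E2
  refine ⟨max (max N3 N4) (max N2 1), fun n hn => ?_⟩
  have hnN3 : N3 ≤ n := le_trans (le_max_left _ _) (le_trans (le_max_left _ _) hn)
  have hnN4 : N4 ≤ n := le_trans (le_max_right _ _) (le_trans (le_max_left _ _) hn)
  have hnN2 : N2 ≤ n := le_trans (le_max_left _ _) (le_trans (le_max_right _ _) hn)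
  have hn1 : 1 ≤ n := le_trans (le_max_right _ _) (le_trans (le_max_right _ _) hn)
  have hNpos : (0:ℝ) < n := by exact_mod_cast hn1
  have hfn : 0 < f n := hpos _ hNpos
  have hXuN : Xu ≤ (n : ℝ) := hN2 n hnN2
  set N : ℝ := (n : ℝ) with hNdef
  -- definitions
  set A : ℝ := (∑ k ∈ Finset.Icc 1 n, f k) / (N * f n) with hA
  set R : ℝ := ∑ k ∈ Finset.Icc 1 n, ((k : ℝ) / N) ^ β / N with hR
  rw [Real.dist_eq]
  have hAsum : A = ∑ k ∈ Finset.Icc 1 n, f k / (N * f n) := by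
    rw [hA, Finset.sum_div]
  set K : ℕ := ⌊δ * N⌋₊ with hK
  have hKn : K ≤ n := by
    have h1 : δ * N ≤ N := by nlinarith
    calc K ≤ ⌊N⌋₊ := Nat.floor_le_floor h1
      _ = n := by rw [hNdef]; exact_mod_cast Nat.floor_natCast n
  have hKN : (K : ℝ) ≤ δ * N := Nat.floor_le (by positivity)
  clear_value K
  -- termwise difference bound on the main part
  have hmain : ∀ k ∈ Finset.Ioc K n, |f k / (N * f n) - ((k:ℝ)/N) ^ β / N| ≤ ε / 5 / N := by
    intro k hk
    obtain ⟨hk1, hk2⟩ := Finset.mem_Ioc.mp hk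
    have hkR : δ * N < (k : ℝ) := by
      calc δ * N < (K : ℝ) + 1 := by rw [hK]; exact Nat.lt_floor_add_one _
        _ ≤ (k : ℝ) := by exact_mod_cast hk1
    set l : ℝ := (k : ℝ) / N with hl
    have hlδ : δ ≤ l := by
      rw [hl, le_div_iff₀ hNpos]; linarith
    have hl1 : l ≤ 1 := by
      rw [hl, div_le_one hNpos, hNdef]; exact_mod_cast hk2
    have hlN : l * N = (k : ℝ) := by rw [hl]; field_simp
    have := hXuct N hXuN l hlδ hl1
    rw [hlN] at this
    have heq : f k / (N * f n) - ((k:ℝ)/N) ^ β / N = (f k / f N - l ^ β) / N := by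
      rw [hl]; field_simp; rw [sub_mul, div_mul_cancel₀ _ hfn.ne']
    rw [heq, abs_div, abs_of_pos hNpos]
    exact div_le_div_of_nonneg_right this hNpos.le
  -- termwise bounds on the tail
  have htail_r : ∀ k ∈ Finset.Ioc 0 K, ((k:ℝ)/N) ^ β / N ≤ ((k:ℝ)/N) ^ γ / N := by
    intro k hk
    obtain ⟨hk1, hk2⟩ := Finset.mem_Ioc.mp hk
    have hkpos : (0:ℝ) < k := by exact_mod_cast hk1
    have hkN : (k:ℝ) / N ≤ 1 := by
      rw [div_le_one hNpos]
      have : (k:ℝ) ≤ K := by exact_mod_cast hk2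
      calc (k:ℝ) ≤ K := this
        _ ≤ δ * N := hKN
        _ ≤ N := by nlinarith
    apply fun h => div_le_div_of_nonneg_right h hNpos.le
    exact Real.rpow_le_rpow_of_exponent_ge (by positivity) hkN hγβ.le
  -- sums
  have hsum_γ : ∑ k ∈ Finset.Icc 1 K, ((k:ℝ)/N) ^ γ / N ≤ δ ^ p / p := by
    calc ∑ k ∈ Finset.Icc 1 K, ((k:ℝ)/N) ^ γ / N ≤ ((K:ℝ)/N) ^ p / p := by
          rw [hNdef, hpdef]; exact sum_rpow_le hγ1 hγ0 n K hn1
      _ ≤ δ ^ p / p := by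
          apply fun h => div_le_div_of_nonneg_right h hp0.le
          apply Real.rpow_le_rpow (by positivity) _ hp0.le
          rw [div_le_iff₀ hNpos]; linarith [hKN]
  -- |A - R| bound
  have hIcc_Ioc : ∀ m : ℕ, Finset.Icc 1 m = Finset.Ioc 0 m := fun m => by
    rw [← Finset.Icc_add_one_left_eq_Ioc]; rfl
  have hsplit : ∑ k ∈ Finset.Icc 1 n, |f k / (N * f n) - ((k:ℝ)/N) ^ β / N| =
      (∑ k ∈ Finset.Ioc 0 K, |f k / (N * f n) - ((k:ℝ)/N) ^ β / N|) +
      ∑ k ∈ Finset.Ioc K n, |f k / (N * f n) - ((k:ℝ)/N) ^ β / N| := by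
    rw [hIcc_Ioc n, ← Finset.sum_Ioc_consecutive _ (Nat.zero_le K) hKn]
  have hAR : |A - R| ≤ ∑ k ∈ Finset.Icc 1 n, |f k / (N * f n) - ((k:ℝ)/N) ^ β / N| := by
    rw [hAsum, hR, ← Finset.sum_sub_distrib]
    exact Finset.abs_sum_le_sum_abs _ _
  -- bound on main part sum
  have hmains : ∑ k ∈ Finset.Ioc K n, |f k / (N * f n) - ((k:ℝ)/N) ^ β / N| ≤ ε / 5 := by
    calc ∑ k ∈ Finset.Ioc K n, |f k / (N * f n) - ((k:ℝ)/N) ^ β / N|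
        ≤ ∑ _k ∈ Finset.Ioc K n, (ε / 5 / N) := Finset.sum_le_sum hmain
      _ = (n - K : ℕ) * (ε / 5 / N) := by rw [Finset.sum_const, Nat.card_Ioc]; ring
      _ ≤ N * (ε / 5 / N) := by
          apply mul_le_mul_of_nonneg_right _ (by positivity)
          rw [hNdef]; exact_mod_cast Nat.sub_le n K
      _ = ε / 5 := by field_simp
  -- bound on tail sum
  have htails : ∑ k ∈ Finset.Ioc 0 K, |f k / (N * f n) - ((k:ℝ)/N) ^ β / N| ≤
      ε / 5 + (C + 1) * δ ^ p / p := by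
    have habs : ∀ k ∈ Finset.Ioc 0 K, |f k / (N * f n) - ((k:ℝ)/N) ^ β / N| ≤
        f k / (N * f n) + ((k:ℝ)/N) ^ γ / N := by
      intro k hk
      obtain ⟨hk1, _⟩ := Finset.mem_Ioc.mp hk
      have hkpos : (0:ℝ) < k := by exact_mod_cast hk1
      have h1 : 0 ≤ f k / (N * f n) :=
        div_nonneg (hpos _ hkpos).le (mul_pos hNpos hfn).le
      have h2 : 0 ≤ ((k:ℝ)/N) ^ β / N := by positivity
      calc |f k / (N * f n) - ((k:ℝ)/N) ^ β / N|
          ≤ |f k / (N * f n)| + |((k:ℝ)/N) ^ β / N| := abs_sub _ _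
        _ = f k / (N * f n) + ((k:ℝ)/N) ^ β / N := by
            rw [abs_of_nonneg h1, abs_of_nonneg h2]
        _ ≤ _ := by linarith [htail_r k hk]
    have hsum1 : ∑ k ∈ Finset.Ioc 0 K, (f k / (N * f n) + ((k:ℝ)/N) ^ γ / N) =
        (∑ k ∈ Finset.Ioc 0 K, f k / (N * f n)) + ∑ k ∈ Finset.Ioc 0 K, ((k:ℝ)/N) ^ γ / N :=
      Finset.sum_add_distrib
    have hsum_r : ∑ k ∈ Finset.Ioc 0 K, ((k:ℝ)/N) ^ γ / N ≤ δ ^ p / p := by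
      rw [← hIcc_Ioc K]; exact hsum_γ
    -- split the f-part at X'
    set M : ℕ := min K X' with hM
    have hMK : M ≤ K := min_le_left _ _
    have hMX' : M ≤ X' := min_le_right _ _
    clear_value M
    have htnn : ∀ k ∈ Finset.Ioc M K, (0:ℝ) ≤ f k / (N * f n) := by
      intro k hk
      obtain ⟨hk1, _⟩ := Finset.mem_Ioc.mp hk
      have hkp : (0:ℝ) < k := by
        have : 0 < k := Nat.pos_of_ne_zero (by omega)
        exact_mod_cast this
      exact div_nonneg (hpos _ hkp).le (mul_pos hNpos hfn).le
    have hfsplit : ∑ k ∈ Finset.Ioc 0 K, f k / (N * f n) =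
        (∑ k ∈ Finset.Ioc 0 M, f k / (N * f n)) + ∑ k ∈ Finset.Ioc M K, f k / (N * f n) := by
      rw [← Finset.sum_Ioc_consecutive _ (Nat.zero_le M) hMK]
    have hf1 : ∑ k ∈ Finset.Ioc 0 M, f k / (N * f n) ≤ ε / 5 := by
      have hsub : Finset.Ioc 0 M ⊆ Finset.Ioc 0 X' := Finset.Ioc_subset_Ioc le_rfl hMX'
      have h1 : ∑ k ∈ Finset.Ioc 0 M, f k / (N * f n) ≤
          ∑ k ∈ Finset.Ioc 0 X', f k / (N * f n) := by
        apply Finset.sum_le_sum_of_subset_of_nonneg hsub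
        intro k hk _
        obtain ⟨hk1, _⟩ := Finset.mem_Ioc.mp hk
        have hkp : (0:ℝ) < k := by exact_mod_cast hk1
        exact div_nonneg (hpos _ hkp).le (mul_pos hNpos hfn).le
      have h2 : ∑ k ∈ Finset.Ioc 0 X', f k / (N * f n) = cT / (N * f n) := by
        rw [← hIcc_Ioc X', hcT, Finset.sum_div]
      calc ∑ k ∈ Finset.Ioc 0 M, f k / (N * f n)
          ≤ ∑ k ∈ Finset.Ioc 0 X', f k / (N * f n) := h1
        _ = cT / (N * f n) := h2
        _ ≤ ε / 5 := hN3 n hnN3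
    have hf2 : ∑ k ∈ Finset.Ioc M K, f k / (N * f n) ≤ C * (δ ^ p / p) := by
      have hterm : ∀ k ∈ Finset.Ioc M K, f k / (N * f n) ≤ C * (((k:ℝ)/N) ^ γ / N) := by
        intro k hk
        obtain ⟨hk1, hk2⟩ := Finset.mem_Ioc.mp hk
        have hX'k : X' < k := by
          rcases le_total X' K with h | h
          · rwa [hM, min_eq_right h] at hk1
          · rw [hM, min_eq_left h] at hk1
            exact absurd (lt_of_lt_of_le hk1 hk2) (lt_irrefl K)
        have hXk : X ≤ (k:ℝ) := by
          calc X ≤ (X' : ℝ) := hXX'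
            _ ≤ (k : ℝ) := by exact_mod_cast hX'k.le
        have hkN : (k:ℝ) ≤ N := by
          rw [hNdef]; exact_mod_cast le_trans hk2 hKn
        have hp := hpott (k:ℝ) N hXk hkN
        have hkpos : (0:ℝ) < k := lt_of_lt_of_le (lt_of_lt_of_le one_pos hX1) hXk
        calc f k / (N * f n) ≤ (C * ((k:ℝ)/N) ^ γ * f N) / (N * f n) := by
              exact div_le_div_of_nonneg_right hp (mul_pos hNpos hfn).le
          _ = C * (((k:ℝ)/N) ^ γ / N) := by
              rw [hNdef]; field_simp; ring_nf; exact mul_inv_cancel₀ hfn.ne'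
      have hsub2 : Finset.Ioc M K ⊆ Finset.Ioc 0 K := Finset.Ioc_subset_Ioc (Nat.zero_le M) le_rfl
      calc ∑ k ∈ Finset.Ioc M K, f k / (N * f n)
          ≤ ∑ k ∈ Finset.Ioc M K, C * (((k:ℝ)/N) ^ γ / N) := Finset.sum_le_sum hterm
        _ ≤ ∑ k ∈ Finset.Ioc 0 K, C * (((k:ℝ)/N) ^ γ / N) := by
            apply Finset.sum_le_sum_of_subset_of_nonneg hsub2
            intro k hk _
            obtain ⟨hk1, _⟩ := Finset.mem_Ioc.mp hk
            have : (0:ℝ) < k := by exact_mod_cast hk1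
            positivity
        _ = C * ∑ k ∈ Finset.Ioc 0 K, (((k:ℝ)/N) ^ γ / N) := by rw [Finset.mul_sum]
        _ ≤ C * (δ ^ p / p) := mul_le_mul_of_nonneg_left hsum_r hCpos.le
    calc ∑ k ∈ Finset.Ioc 0 K, |f k / (N * f n) - ((k:ℝ)/N) ^ β / N|
        ≤ ∑ k ∈ Finset.Ioc 0 K, (f k / (N * f n) + ((k:ℝ)/N) ^ γ / N) :=
          Finset.sum_le_sum habs
      _ = (∑ k ∈ Finset.Ioc 0 K, f k / (N * f n)) +
          ∑ k ∈ Finset.Ioc 0 K, ((k:ℝ)/N) ^ γ / N := hsum1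
      _ ≤ ((ε / 5 + C * (δ ^ p / p))) + δ ^ p / p := by
          rw [hfsplit]
          have := add_le_add (add_le_add hf1 hf2) hsum_r
          linarith
      _ = ε / 5 + (C + 1) * δ ^ p / p := by ring
  -- final combination
  have hRL : |R - L| ≤ ε / 5 := by
    have := hN4 n hnN4
    rw [hR, hNdef]
    exact this
  have hARfinal : |A - R| ≤ ε / 5 + (C + 1) * δ ^ p / p + ε / 5 := by
    calc |A - R| ≤ _ := hAR
      _ = _ := hsplit
      _ ≤ (ε / 5 + (C + 1) * δ ^ p / p) + ε / 5 := add_le_add htails hmains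
      _ = _ := by ring
  calc |A - L| ≤ |A - R| + |R - L| := abs_sub_le _ _ _
    _ ≤ (ε / 5 + (C + 1) * δ ^ p / p + ε / 5) + ε / 5 := add_le_add hARfinal hRL
    _ ≤ (ε / 5 + ε / 5 + ε / 5) + ε / 5 := by linarith [hδbound]
    _ < ε := by linarith
end

section
/- Let R:(0,∞)→(0,∞) be monotone on (0,∞) and regularly varying at +∞ with index −α where α<1, and let σ_n² = Σ_{k=1}^n R(k). Then there exist C>0 and n₀∈ℕ such that for all n≥n₀ and all real t∈[1, n/2], the tail sum S₂ = σ_n^{−2} Σ_{k=⌊n/t⌋}^{n} R(k) cos(2πkt/n) satisfies |S₂| ≤ (C/(t R(n))) ( Σ_{k=⌊n/t⌋}^{n−1} |R(k)−R(k+1)| + R(n) + R(⌊n/t⌋) ). -/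
open Filter Real

/-- Abel summation identity. -/
lemma abel_id (a D : ℕ → ℝ) {m n : ℕ} (h : m ≤ n) :
    ∑ k ∈ Finset.Icc m n, a k * (D k - D (k - 1)) =
      a n * D n - a m * D (m - 1) + ∑ k ∈ Finset.Ico m n, (a k - a (k + 1)) * D k := by
  induction n, h using Nat.le_induction with
  | base => simp [Finset.Icc_self]; ring
  | succ n hmn ih =>
      rw [Finset.sum_Icc_succ_top (le_trans hmn (Nat.le_succ n)),
        Finset.sum_Ico_succ_top hmn, ih, Nat.add_sub_cancel]
      ring

/-- Dirichlet kernel bound. -/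
lemma dirichlet_bound (θ : ℝ) (hs : 0 < Real.sin (θ / 2)) (k : ℕ) :
    |∑ j ∈ Finset.Icc 1 k, Real.cos (j * θ)| ≤ 1 / Real.sin (θ / 2) := by
  have key : ∀ k : ℕ, 2 * Real.sin (θ / 2) * ∑ j ∈ Finset.Icc 1 k, Real.cos (j * θ)
      = Real.sin (k * θ + θ / 2) - Real.sin (θ / 2) := by
    intro k
    induction k with
    | zero => simp
    | succ j ih =>
        rw [Finset.sum_Icc_succ_top (Nat.succ_le_succ (Nat.zero_le j))]
        have h2 : Real.sin ((((j : ℝ) + 1) * θ) + θ / 2)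
            - Real.sin ((((j : ℝ) + 1) * θ) - θ / 2)
            = 2 * Real.cos (((j : ℝ) + 1) * θ) * Real.sin (θ / 2) := by
          rw [Real.sin_add, Real.sin_sub]; ring
        have e : ((j : ℝ) + 1) * θ - θ / 2 = (j : ℝ) * θ + θ / 2 := by ring
        rw [e] at h2
        push_cast
        linear_combination ih - h2
  have hk := key k
  have hb : |Real.sin ((k : ℝ) * θ + θ / 2) - Real.sin (θ / 2)| ≤ 2 := by
    have h1 := Real.sin_le_one ((k : ℝ) * θ + θ / 2)
    have h2 := Real.neg_one_le_sin ((k : ℝ) * θ + θ / 2)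
    have h3 := Real.sin_le_one (θ / 2)
    have h4 := Real.neg_one_le_sin (θ / 2)
    rw [abs_le]; constructor <;> linarith
  rw [← hk, abs_mul, abs_of_pos (by positivity : (0:ℝ) < 2 * Real.sin (θ / 2))] at hb
  rw [le_div_iff₀ hs]
  nlinarith [abs_nonneg (∑ j ∈ Finset.Icc 1 k, Real.cos (j * θ))]

/-- Karamata-type lower bound for the partial sums. -/
lemma sigma_lower (R : ℝ → ℝ) (hRpos : ∀ x : ℝ, 0 < x → 0 < R x)
    (hRmono : MonotoneOn R (Set.Ioi (0 : ℝ)) ∨ AntitoneOn R (Set.Ioi (0 : ℝ)))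
    (α : ℝ) (hRV : RegularlyVarying R (-α)) :
    ∃ c : ℝ, 0 < c ∧ ∃ n₀ : ℕ, 1 ≤ n₀ ∧ ∀ n : ℕ, n₀ ≤ n →
      c * n * R n ≤ ∑ k ∈ Finset.Icc 1 n, R k := by
  rcases hRmono with hmono | hanti
  · have hL : (0:ℝ) < (1/2 : ℝ) ^ (-α) := Real.rpow_pos_of_pos (by norm_num) _
    set L := ((1/2 : ℝ)) ^ (-α) with hLdef
    have ht := hRV (1/2) (by norm_num)
    have hev : ∀ᶠ x in atTop, L / 2 ≤ R ((1/2) * x) / R x :=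
      ht.eventually (eventually_ge_nhds (by linarith))
    obtain ⟨X, hX⟩ := Filter.eventually_atTop.mp hev
    refine ⟨L / 4, by positivity, max 1 ⌈X⌉₊, le_max_left _ _, ?_⟩
    intro n hn
    have hn1 : 1 ≤ n := le_trans (le_max_left _ _) hn
    have hnX : X ≤ (n : ℝ) := by
      have h : ⌈X⌉₊ ≤ n := le_trans (le_max_right _ _) hn
      calc X ≤ (⌈X⌉₊ : ℝ) := Nat.le_ceil X
        _ ≤ n := by exact_mod_cast h
    have hnpos : (0:ℝ) < n := by exact_mod_cast hn1
    have hRn : 0 < R n := hRpos _ hnpos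
    have hhalfpos : (0:ℝ) < (1/2) * n := by positivity
    have hRhalf : 0 < R ((1/2) * n) := hRpos _ hhalfpos
    have h1 : L / 2 * R n ≤ R ((1/2) * n) := by
      have h := hX n hnX
      rw [le_div_iff₀ hRn] at h; linarith
    set m' := ⌈(n : ℝ) / 2⌉₊ with hm'
    have hm'1 : 1 ≤ m' := Nat.one_le_ceil_iff.2 (by positivity)
    have hm'n : m' ≤ n := Nat.ceil_le.2 (by linarith)
    have hm'lt : (m' : ℝ) < (n : ℝ) / 2 + 1 := Nat.ceil_lt_add_one (by positivity)
    have hm'ge : (n : ℝ) / 2 ≤ (m' : ℝ) := Nat.le_ceil _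
    have hcast : ((n + 1 - m' : ℕ) : ℝ) = (n : ℝ) + 1 - m' := by
      have h : m' ≤ n + 1 := le_trans hm'n (Nat.le_succ n)
      rw [Nat.cast_sub h]; push_cast; ring
    have hcard : ∑ _k ∈ Finset.Icc m' n, R ((1/2) * (n : ℝ))
        = ((n + 1 - m' : ℕ) : ℝ) * R ((1/2) * n) := by
      rw [Finset.sum_const, Nat.card_Icc]; simp [nsmul_eq_mul]
    have hsum1 : ∑ _k ∈ Finset.Icc m' n, R ((1/2) * (n : ℝ))
        ≤ ∑ k ∈ Finset.Icc m' n, R k := by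
      apply Finset.sum_le_sum
      intro k hk
      obtain ⟨hk1, _hk2⟩ := Finset.mem_Icc.mp hk
      have hkpos : (0:ℝ) < k := by
        exact_mod_cast lt_of_lt_of_le (Nat.lt_of_lt_of_le Nat.zero_lt_one hm'1) hk1
      have hkm : (m' : ℝ) ≤ k := by exact_mod_cast hk1
      exact hmono hhalfpos (Set.mem_Ioi.mpr hkpos) (by linarith)
    have hsum2 : ∑ k ∈ Finset.Icc m' n, R k ≤ ∑ k ∈ Finset.Icc 1 n, R k := by
      apply Finset.sum_le_sum_of_subset_of_nonneg (Finset.Icc_subset_Icc_left hm'1)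
      intro k hk _
      have hk1 : 1 ≤ k := (Finset.mem_Icc.mp hk).1
      exact le_of_lt (hRpos _ (by exact_mod_cast hk1))
    have hA : (n : ℝ) / 2 ≤ (n : ℝ) + 1 - m' := by linarith
    have hB : (n : ℝ) / 2 * (L / 2 * R n) ≤ ((n : ℝ) + 1 - m') * R ((1/2) * n) :=
      mul_le_mul hA h1 (by positivity) (by linarith)
    calc L / 4 * n * R n = (n : ℝ) / 2 * (L / 2 * R n) := by ring
      _ ≤ ((n : ℝ) + 1 - m') * R ((1/2) * n) := hB
      _ = ((n + 1 - m' : ℕ) : ℝ) * R ((1/2) * n) := by rw [hcast]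
      _ = ∑ _k ∈ Finset.Icc m' n, R ((1/2) * (n : ℝ)) := hcard.symm
      _ ≤ ∑ k ∈ Finset.Icc m' n, R k := hsum1
      _ ≤ ∑ k ∈ Finset.Icc 1 n, R k := hsum2
  · refine ⟨1, one_pos, 1, le_refl 1, ?_⟩
    intro n hn
    have hnpos : (0:ℝ) < n := by exact_mod_cast hn
    have hconst : ∑ _k ∈ Finset.Icc 1 n, R (n : ℝ) = (n : ℝ) * R n := by
      rw [Finset.sum_const, Nat.card_Icc]; simp [nsmul_eq_mul]
    have h : ∑ _k ∈ Finset.Icc 1 n, R (n : ℝ) ≤ ∑ k ∈ Finset.Icc 1 n, R k := by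
      apply Finset.sum_le_sum
      intro k hk
      obtain ⟨hk1, hk2⟩ := Finset.mem_Icc.mp hk
      have hkpos : (0:ℝ) < k := by exact_mod_cast hk1
      exact hanti (Set.mem_Ioi.mpr hkpos) (Set.mem_Ioi.mpr hnpos) (by exact_mod_cast hk2)
    calc (1:ℝ) * n * R n = (n : ℝ) * R n := by ring
      _ = ∑ _k ∈ Finset.Icc 1 n, R (n : ℝ) := hconst.symm
      _ ≤ ∑ k ∈ Finset.Icc 1 n, R k := h

/-- Abel-summation estimate for the tail sum
`S₂ = σ_n^{-2} Σ_{k=⌊n/t⌋}^n R(k) cos(2πkt/n)`: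
`|S₂| ≤ (C/(t R(n))) (Σ_{k=⌊n/t⌋}^{n-1} |R(k)-R(k+1)| + R(n) + R(⌊n/t⌋))`. -/
theorem tail_sum_abel_bound
    (R : ℝ → ℝ) (hRpos : ∀ x : ℝ, 0 < x → 0 < R x)
    (hRmono : MonotoneOn R (Set.Ioi (0 : ℝ)) ∨ AntitoneOn R (Set.Ioi (0 : ℝ)))
    (α : ℝ) (hα : α < 1) (hRV : RegularlyVarying R (-α)) :
    ∃ C : ℝ, 0 < C ∧ ∃ n₀ : ℕ, ∀ n : ℕ, n₀ ≤ n → ∀ t : ℝ, 1 ≤ t → t ≤ (n : ℝ) / 2 →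
      |(∑ k ∈ Finset.Icc ⌊(n : ℝ) / t⌋₊ n, R k * Real.cos (2 * π * k * t / n)) /
          (∑ k ∈ Finset.Icc 1 n, R k)| ≤
        C / (t * R n) *
          ((∑ k ∈ Finset.Ico ⌊(n : ℝ) / t⌋₊ n, |R k - R ((k : ℝ) + 1)|) +
            R n + R (⌊(n : ℝ) / t⌋₊ : ℝ)) := by
  obtain ⟨c, hc, n₁, hn₁1, hsig⟩ := sigma_lower R hRpos hRmono α hRV
  refine ⟨1 / (2 * c), by positivity, n₁, ?_⟩
  intro n hn t ht1 ht2
  have hn1 : 1 ≤ n := le_trans hn₁1 hn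
  have hnpos : (0:ℝ) < n := by exact_mod_cast hn1
  have htpos : (0:ℝ) < t := lt_of_lt_of_le one_pos ht1
  set m := ⌊(n : ℝ) / t⌋₊ with hmdef
  have hnt2 : (2:ℝ) ≤ (n : ℝ) / t := by rw [le_div_iff₀ htpos]; linarith
  have hm2 : 2 ≤ m := Nat.le_floor (by exact_mod_cast hnt2)
  have hmn : m ≤ n := by
    have h : (n : ℝ) / t ≤ (n : ℝ) := by rw [div_le_iff₀ htpos]; nlinarith
    calc m ≤ ⌊(n : ℝ)⌋₊ := Nat.floor_le_floor h
      _ = n := Nat.floor_natCast n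
  have hmpos : (0:ℝ) < m := by
    have : 0 < m := lt_of_lt_of_le two_pos hm2
    exact_mod_cast this
  have hRm : 0 < R m := hRpos _ hmpos
  have hRn : 0 < R n := hRpos _ hnpos
  set θ := 2 * π * t / (n : ℝ) with hθ
  have hθ2 : θ / 2 = π * t / n := by rw [hθ]; ring
  have hsinlb : 2 * t / (n : ℝ) ≤ Real.sin (θ / 2) := by
    rw [hθ2]
    have hx0 : 0 ≤ π * t / n := by positivity
    have hx2 : π * t / (n : ℝ) ≤ π / 2 := by
      rw [div_le_div_iff₀ hnpos two_pos]
      nlinarith [pi_pos]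
    have h := Real.mul_le_sin hx0 hx2
    calc 2 * t / (n : ℝ) = 2 / π * (π * t / n) := by
          field_simp
      _ ≤ Real.sin (π * t / n) := h
  have hsinpos : 0 < Real.sin (θ / 2) := lt_of_lt_of_le (by positivity) hsinlb
  set D : ℕ → ℝ := fun k => ∑ j ∈ Finset.Icc 1 k, Real.cos (j * θ) with hD
  have hK : ∀ k, |D k| ≤ (n : ℝ) / (2 * t) := by
    intro k
    calc |D k| ≤ 1 / Real.sin (θ / 2) := dirichlet_bound θ hsinpos k
      _ ≤ 1 / (2 * t / (n : ℝ)) := one_div_le_one_div_of_le (by positivity) hsinlb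
      _ = (n : ℝ) / (2 * t) := one_div_div _ _
  set K := (n : ℝ) / (2 * t) with hKdef
  have hK0 : 0 ≤ K := by positivity
  have hcos : ∀ k ∈ Finset.Icc m n,
      R k * Real.cos (2 * π * k * t / n) = R k * (D k - D (k - 1)) := by
    intro k hk
    have hk1 : 1 ≤ k := le_trans (le_trans one_le_two hm2) (Finset.mem_Icc.mp hk).1
    obtain ⟨j, rfl⟩ : ∃ j, k = j + 1 := ⟨k - 1, (Nat.succ_pred_eq_of_pos hk1).symm⟩
    have hDs : D (j + 1) = D j + Real.cos (((j + 1 : ℕ) : ℝ) * θ) :=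
      Finset.sum_Icc_succ_top (Nat.succ_le_succ (Nat.zero_le j)) _
    have harg : 2 * π * ((j : ℝ) + 1) * t / (n : ℝ) = ((j : ℝ) + 1) * θ := by
      rw [hθ]; ring
    rw [Nat.add_sub_cancel, hDs]
    push_cast
    rw [harg]
    ring
  rw [Finset.sum_congr rfl hcos]
  have habel : (∑ k ∈ Finset.Icc m n, R k * (D k - D (k - 1))) =
      R n * D n - R m * D (m - 1)
        + ∑ k ∈ Finset.Ico m n, (R k - R ((k + 1 : ℕ) : ℝ)) * D k :=
    abel_id (fun k : ℕ => R k) D hmn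
  rw [habel]
  set V := ∑ k ∈ Finset.Ico m n, |R k - R ((k : ℝ) + 1)| with hV
  have hV0 : 0 ≤ V := Finset.sum_nonneg fun k _ => abs_nonneg _
  have hsum : |∑ k ∈ Finset.Ico m n, (R k - R ((k + 1 : ℕ) : ℝ)) * D k| ≤ V * K := by
    calc |∑ k ∈ Finset.Ico m n, (R k - R ((k + 1 : ℕ) : ℝ)) * D k|
        ≤ ∑ k ∈ Finset.Ico m n, |(R k - R ((k + 1 : ℕ) : ℝ)) * D k| :=
          Finset.abs_sum_le_sum_abs _ _
      _ ≤ ∑ k ∈ Finset.Ico m n, |R k - R ((k : ℝ) + 1)| * K := by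
          apply Finset.sum_le_sum
          intro k _
          rw [abs_mul]
          have hc1 : ((k + 1 : ℕ) : ℝ) = (k : ℝ) + 1 := by push_cast; ring
          rw [hc1]
          exact mul_le_mul_of_nonneg_left (hK k) (abs_nonneg _)
      _ = V * K := by rw [hV, Finset.sum_mul]
  have h1 : |R (n : ℝ) * D n| ≤ R n * K := by
    rw [abs_mul, abs_of_pos hRn]
    exact mul_le_mul_of_nonneg_left (hK n) hRn.le
  have h2 : |R (m : ℝ) * D (m - 1)| ≤ R m * K := by
    rw [abs_mul, abs_of_pos hRm]
    exact mul_le_mul_of_nonneg_left (hK (m - 1)) hRm.le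
  have hnum : |R (n : ℝ) * D n - R (m : ℝ) * D (m - 1)
      + ∑ k ∈ Finset.Ico m n, (R k - R ((k + 1 : ℕ) : ℝ)) * D k|
      ≤ K * (V + R n + R m) := by
    have htri : |R (n : ℝ) * D n - R (m : ℝ) * D (m - 1)|
        ≤ |R (n : ℝ) * D n| + |R (m : ℝ) * D (m - 1)| := by
      rw [sub_eq_add_neg]
      exact (abs_add_le _ _).trans (by rw [abs_neg])
    calc |R (n : ℝ) * D n - R (m : ℝ) * D (m - 1)
        + ∑ k ∈ Finset.Ico m n, (R k - R ((k + 1 : ℕ) : ℝ)) * D k|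
        ≤ |R (n : ℝ) * D n - R (m : ℝ) * D (m - 1)|
          + |∑ k ∈ Finset.Ico m n, (R k - R ((k + 1 : ℕ) : ℝ)) * D k| := abs_add_le _ _
      _ ≤ (|R (n : ℝ) * D n| + |R (m : ℝ) * D (m - 1)|) + V * K :=
          add_le_add htri hsum
      _ ≤ (R n * K + R m * K) + V * K := by
          have := add_le_add h1 h2; linarith
      _ = K * (V + R n + R m) := by ring
  have hσpos : 0 < ∑ k ∈ Finset.Icc 1 n, R (k : ℝ) := by
    apply Finset.sum_pos
    · intro k hk
      have hk1 : 1 ≤ k := (Finset.mem_Icc.mp hk).1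
      exact hRpos _ (by exact_mod_cast hk1)
    · exact ⟨1, Finset.mem_Icc.mpr ⟨le_refl 1, hn1⟩⟩
  have hσ := hsig n hn
  have hden : 0 < c * n * R n := mul_pos (mul_pos hc hnpos) hRn
  rw [abs_div, abs_of_pos hσpos]
  have hBnn : 0 ≤ V + R (n:ℝ) + R (m:ℝ) := by positivity
  calc |R (n : ℝ) * D n - R (m : ℝ) * D (m - 1)
      + ∑ k ∈ Finset.Ico m n, (R k - R ((k + 1 : ℕ) : ℝ)) * D k|
      / (∑ k ∈ Finset.Icc 1 n, R (k : ℝ))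
      ≤ (K * (V + R n + R m)) / (c * n * R n) :=
        div_le_div₀ (by positivity) hnum hden hσ
    _ = 1 / (2 * c) / (t * R (n : ℝ)) * (V + R (n : ℝ) + R (m : ℝ)) := by
        rw [hKdef]
        field_simp
end

section
/- Let R:(0,∞)→(0,∞) be monotone on (0,∞) and regularly varying at +∞ with index −α where α<1; write R(t)=L(t)t^{−α} with L slowly varying, and let σ_n² = Σ_{k=1}^n R(k). Then there exist C>0 and n₀∈ℕ such that for all n≥n₀ and all real t∈[1, n/2], the tail sum S₂ = σ_n^{−2} Σ_{k=⌊n/t⌋}^{n} R(k) cos(2πkt/n) satisfies |S₂| ≤ C max( t^{α−1} L(n/t)/L(n), 1/t ). -/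
open Filter Real

lemma abs_exp_theta_sub_one (θ : ℝ) :
    ‖Complex.exp (θ * Complex.I) - 1‖ = 2 * |Real.sin (θ / 2)| := by
  rw [Complex.exp_mul_I]
  have h1 : Complex.cos θ + Complex.sin θ * Complex.I - 1
      = Complex.ofReal (Real.cos θ - 1) + Complex.ofReal (Real.sin θ) * Complex.I := by
    push_cast; ring
  rw [h1, Complex.norm_def, Complex.normSq_add_mul_I]
  have hs : Real.sin (θ / 2) ^ 2 = 1 / 2 - Real.cos (2 * (θ / 2)) / 2 :=
    Real.sin_sq_eq_half_sub _
  have h2θ : 2 * (θ / 2) = θ := by ring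
  rw [h2θ] at hs
  have hc := Real.sin_sq_add_cos_sq θ
  have h2 : (Real.cos θ - 1) ^ 2 + Real.sin θ ^ 2 = (2 * |Real.sin (θ / 2)|) ^ 2 := by
    rw [mul_pow, sq_abs]; nlinarith
  rw [h2, Real.sqrt_sq (by positivity)]

lemma cos_sum_bound (θ : ℝ) (hs : 0 < Real.sin (θ / 2)) (N : ℕ) :
    |∑ k ∈ Finset.range N, Real.cos (k * θ)| ≤ 1 / Real.sin (θ / 2) := by
  set z : ℂ := Complex.exp (θ * Complex.I) with hz
  have habs : ‖z - 1‖ = 2 * Real.sin (θ / 2) := by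
    rw [hz, abs_exp_theta_sub_one, abs_of_pos hs]
  have hz1 : z ≠ 1 := by
    intro h
    rw [h, sub_self] at habs
    simp at habs
    linarith
  have hre : ∀ k : ℕ, (z ^ k).re = Real.cos (k * θ) := by
    intro k
    rw [hz, ← Complex.exp_nat_mul]
    have h : (k : ℂ) * ((θ : ℂ) * Complex.I) = ((k * θ : ℝ) : ℂ) * Complex.I := by
      push_cast; ring
    rw [h, Complex.exp_ofReal_mul_I_re]
  have habsz : ‖z‖ = 1 := by rw [hz]; exact Complex.norm_exp_ofReal_mul_I θ
  have hnum : ‖z ^ N - 1‖ ≤ 2 := by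
    have := norm_sub_le (z ^ N) 1
    calc ‖z ^ N - 1‖ ≤ ‖z ^ N‖ + ‖(1:ℂ)‖ := this
      _ = 2 := by rw [norm_pow, habsz, one_pow, norm_one]; norm_num
  calc |∑ k ∈ Finset.range N, Real.cos (k * θ)|
      = |(∑ k ∈ Finset.range N, z ^ k).re| := by
        rw [Complex.re_sum]
        congr 1
        exact Finset.sum_congr rfl fun k _ => (hre k).symm
    _ ≤ ‖∑ k ∈ Finset.range N, z ^ k‖ := Complex.abs_re_le_norm _
    _ = ‖z ^ N - 1‖ / ‖z - 1‖ := by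
        rw [geom_sum_eq hz1 N, norm_div]
    _ ≤ 2 / (2 * Real.sin (θ / 2)) := by
        rw [habs]
        apply div_le_div_of_nonneg_right hnum ?_ |>.trans_eq rfl
        · positivity
    _ = 1 / Real.sin (θ / 2) := by
        rw [div_mul_eq_div_div]
        norm_num

lemma abel_bound (f g : ℕ → ℝ) (m n : ℕ) (hmn : m ≤ n) (D : ℝ) (hD : 0 ≤ D)
    (hG : ∀ j : ℕ, |∑ i ∈ Finset.range j, g i| ≤ D)
    (hf0m : 0 ≤ f m) (hf0n : 0 ≤ f n)
    (hmono : (∀ i j, m ≤ i → i ≤ j → j ≤ n → f i ≤ f j) ∨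
      (∀ i j, m ≤ i → i ≤ j → j ≤ n → f j ≤ f i)) :
    |∑ i ∈ Finset.Icc m n, f i * g i| ≤ 2 * max (f m) (f n) * D := by
  have hlt : m < n + 1 := Nat.lt_succ_of_le hmn
  have hIcc : Finset.Icc m n = Finset.Ico m (n + 1) := by
    rw [Finset.Ico_add_one_right_eq_Icc]
  have hparts := Finset.sum_Ico_by_parts f g hlt
  simp only [Nat.add_sub_cancel, smul_eq_mul] at hparts
  rw [hIcc, hparts]
  -- telescoping of |Δf|
  have htel : ∑ i ∈ Finset.Ico m n, (f (i + 1) - f i) = f n - f m := by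
    rw [Finset.sum_Ico_eq_sub _ hmn, Finset.sum_range_sub, Finset.sum_range_sub]
    ring
  have habsDelta : ∑ i ∈ Finset.Ico m n, |f (i + 1) - f i| = |f n - f m| := by
    rcases hmono with hmono | hmono
    · have : ∀ i ∈ Finset.Ico m n, |f (i + 1) - f i| = f (i + 1) - f i := by
        intro i hi
        rw [Finset.mem_Ico] at hi
        have := hmono i (i + 1) hi.1 (Nat.le_succ i) hi.2
        rw [abs_of_nonneg (by linarith)]
      rw [Finset.sum_congr rfl this, htel,
        abs_of_nonneg (sub_nonneg.mpr (hmono m n le_rfl hmn le_rfl))]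
    · have : ∀ i ∈ Finset.Ico m n, |f (i + 1) - f i| = -(f (i + 1) - f i) := by
        intro i hi
        rw [Finset.mem_Ico] at hi
        have := hmono i (i + 1) hi.1 (Nat.le_succ i) hi.2
        rw [abs_of_nonpos (by linarith)]
      rw [Finset.sum_congr rfl this, Finset.sum_neg_distrib, htel,
        abs_of_nonpos (sub_nonpos.mpr (hmono m n le_rfl hmn le_rfl))]
  have h1 : |f n * ∑ i ∈ Finset.range (n + 1), g i| ≤ f n * D := by
    rw [abs_mul, abs_of_nonneg hf0n]
    exact mul_le_mul_of_nonneg_left (hG _) hf0n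
  have h2 : |f m * ∑ i ∈ Finset.range m, g i| ≤ f m * D := by
    rw [abs_mul, abs_of_nonneg hf0m]
    exact mul_le_mul_of_nonneg_left (hG _) hf0m
  have h3 : |∑ i ∈ Finset.Ico m n, (f (i + 1) - f i) * ∑ j ∈ Finset.range (i + 1), g j|
      ≤ |f n - f m| * D := by
    calc |∑ i ∈ Finset.Ico m n, (f (i + 1) - f i) * ∑ j ∈ Finset.range (i + 1), g j|
        ≤ ∑ i ∈ Finset.Ico m n, |(f (i + 1) - f i) * ∑ j ∈ Finset.range (i + 1), g j| :=
          Finset.abs_sum_le_sum_abs _ _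
      _ ≤ ∑ i ∈ Finset.Ico m n, |f (i + 1) - f i| * D := by
          apply Finset.sum_le_sum
          intro i _
          rw [abs_mul]
          exact mul_le_mul_of_nonneg_left (hG _) (abs_nonneg _)
      _ = |f n - f m| * D := by rw [← Finset.sum_mul, habsDelta]
  have hmaxeq : f n + f m + |f n - f m| = 2 * max (f m) (f n) := by
    rcases le_total (f m) (f n) with h | h
    · rw [abs_of_nonneg (by linarith), max_eq_right h]; ring
    · rw [abs_of_nonpos (by linarith), max_eq_left h]; ring
  calc |f n * (∑ i ∈ Finset.range (n + 1), g i) - f m * (∑ i ∈ Finset.range m, g i)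
        - ∑ i ∈ Finset.Ico m n, (f (i + 1) - f i) * ∑ j ∈ Finset.range (i + 1), g j|
      ≤ |f n * (∑ i ∈ Finset.range (n + 1), g i) - f m * (∑ i ∈ Finset.range m, g i)|
        + |∑ i ∈ Finset.Ico m n, (f (i + 1) - f i) * ∑ j ∈ Finset.range (i + 1), g j| :=
        abs_sub _ _
    _ ≤ (|f n * ∑ i ∈ Finset.range (n + 1), g i| + |f m * ∑ i ∈ Finset.range m, g i|)
        + |f n - f m| * D := add_le_add (abs_sub _ _) h3
    _ ≤ (f n * D + f m * D) + |f n - f m| * D := by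
        apply add_le_add_left (add_le_add h1 h2)
    _ = (f n + f m + |f n - f m|) * D := by ring
    _ = 2 * max (f m) (f n) * D := by rw [hmaxeq]

set_option maxHeartbeats 1000000 in
/-- Estimate for the tail sum `S₂ = σ_n^{-2} Σ_{k=⌊n/t⌋}^n R(k) cos(2πkt/n)` for a
monotone regularly varying `R(t) = L(t) t^{-α}`, `α < 1`:
`|S₂| ≤ C max(t^{α-1} L(n/t)/L(n), 1/t)` for `n` large and `t ∈ [1, n/2]`. -/
theorem tail_sum_bound
    (R : ℝ → ℝ) (hRpos : ∀ x : ℝ, 0 < x → 0 < R x)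
    (hRmono : MonotoneOn R (Set.Ioi (0 : ℝ)) ∨ AntitoneOn R (Set.Ioi (0 : ℝ)))
    (α : ℝ) (hα : α < 1) (hRV : RegularlyVarying R (-α))
    (L : ℝ → ℝ) (hL : ∀ x : ℝ, 0 < x → R x = L x * x ^ (-α))
    (hLslow : RegularlyVarying L 0) :
    ∃ C : ℝ, 0 < C ∧ ∃ n₀ : ℕ, ∀ n : ℕ, n₀ ≤ n → ∀ t : ℝ, 1 ≤ t → t ≤ (n : ℝ) / 2 →
      |(∑ k ∈ Finset.Icc ⌊(n : ℝ) / t⌋₊ n, R k * Real.cos (2 * π * k * t / n)) /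
          (∑ k ∈ Finset.Icc 1 n, R k)| ≤
        C * max (t ^ (α - 1) * L ((n : ℝ) / t) / L n) (1 / t) := by
  have hc : (0:ℝ) < (1/2 : ℝ) ^ (-α) := Real.rpow_pos_of_pos one_half_pos _
  set c := (1/2 : ℝ) ^ (-α) with hcdef
  have hev : ∀ᶠ y in atTop, R (1/2 * y) / R y ∈ Set.Ioo (c/2) (2*c) :=
    (hRV (1/2) one_half_pos).eventually (Ioo_mem_nhds (by linarith) (by linarith))
  obtain ⟨X₁, hX₁⟩ := Filter.eventually_atTop.mp hev
  set X₀ : ℝ := max X₁ 2 with hX₀def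
  have hX₀2 : (2:ℝ) ≤ X₀ := le_max_right _ _
  have hX₀pos : (0:ℝ) < X₀ := by linarith
  have hRVtail : ∀ y : ℝ, X₀ ≤ y → c/2 * R y ≤ R (y/2) ∧ R (y/2) ≤ 2*c * R y := by
    intro y hy
    have hy0 : (0:ℝ) < y := by linarith
    have hRy : 0 < R y := hRpos y hy0
    have h := hX₁ y (le_trans (le_max_left _ _) hy)
    have heq : (1/2 : ℝ) * y = y / 2 := by ring
    rw [heq] at h
    obtain ⟨h1, h2⟩ := h
    exact ⟨le_of_lt ((lt_div_iff₀ hRy).mp h1), le_of_lt ((div_lt_iff₀ hRy).mp h2)⟩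
  have hR1 : 0 < R 1 := hRpos 1 one_pos
  have hRX₀ : 0 < R X₀ := hRpos X₀ hX₀pos
  set K : ℝ := 2*c + R 1 / R X₀ with hKdef
  have hK : 0 < K := by positivity
  clear_value c K X₀
  have h4c : 0 < 4/c := by positivity
  refine ⟨K + 4/c + 1, by linarith, ⌈X₀⌉₊ + 4, ?_⟩
  intro n hn t ht1 ht2
  have hn4 : 4 ≤ n := le_trans (Nat.le_add_left _ _) hn
  have hnpos : (0:ℝ) < n := by exact_mod_cast Nat.lt_of_lt_of_le (by norm_num) hn4
  have hnX₀ : X₀ ≤ (n:ℝ) := by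
    have h1 : (⌈X₀⌉₊ : ℝ) ≤ n := by exact_mod_cast le_trans (Nat.le_add_right _ _) hn
    exact le_trans (Nat.le_ceil _) h1
  have htpos : (0:ℝ) < t := lt_of_lt_of_le one_pos ht1
  set x : ℝ := (n:ℝ)/t with hxdef
  have hx2 : (2:ℝ) ≤ x := by rw [hxdef, le_div_iff₀ htpos]; linarith
  have hxpos : (0:ℝ) < x := by linarith
  have hxn : x ≤ (n:ℝ) := by rw [hxdef]; exact div_le_self (le_of_lt hnpos) ht1
  set m : ℕ := ⌊x⌋₊ with hmdef
  have hm2 : 2 ≤ m := Nat.le_floor (by exact_mod_cast hx2)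
  have hmpos : (0:ℝ) < (m:ℝ) := by exact_mod_cast Nat.lt_of_lt_of_le (by norm_num) hm2
  have hmn : m ≤ n := by
    calc m ≤ ⌊(n:ℝ)⌋₊ := Nat.floor_le_floor hxn
      _ = n := Nat.floor_natCast n
  have hmnR : (m:ℝ) ≤ (n:ℝ) := by exact_mod_cast hmn
  have hmx : (m:ℝ) ≤ x := Nat.floor_le (le_of_lt hxpos)
  have hxm : x/2 ≤ (m:ℝ) := by
    have := Nat.lt_floor_add_one x
    rw [← hmdef] at this
    linarith
  set θ : ℝ := 2*π*t/(n:ℝ) with hθdef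
  clear_value x m θ
  have hsin : 2*t/(n:ℝ) ≤ Real.sin (θ/2) := by
    have hhalf : θ/2 = π*t/(n:ℝ) := by rw [hθdef]; ring
    have h1 : (0:ℝ) ≤ π*t/(n:ℝ) := by positivity
    have h2 : π*t/(n:ℝ) ≤ π/2 := by
      rw [div_le_div_iff₀ hnpos two_pos]
      nlinarith [pi_pos]
    have h3 := Real.mul_le_sin h1 h2
    rw [hhalf]
    calc 2*t/(n:ℝ) = 2/π * (π*t/(n:ℝ)) := by
          field_simp
      _ ≤ Real.sin (π*t/(n:ℝ)) := h3
  have hsinpos : 0 < Real.sin (θ/2) := lt_of_lt_of_le (by positivity) hsin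
  have hD : 1/Real.sin (θ/2) ≤ (n:ℝ)/(2*t) := by
    rw [div_le_div_iff₀ hsinpos (by positivity)]
    have h5 : 2*t ≤ Real.sin (θ/2) * (n:ℝ) := (div_le_iff₀ hnpos).mp hsin
    nlinarith [h5]
  have hnum_eq : ∑ k ∈ Finset.Icc m n, R k * Real.cos (2*π*k*t/(n:ℝ))
      = ∑ k ∈ Finset.Icc m n, R k * Real.cos (k*θ) := by
    refine Finset.sum_congr rfl fun k _ => ?_
    congr 1
    rw [hθdef]; ring
  have hposcast : ∀ i : ℕ, m ≤ i → (0:ℝ) < (i:ℝ) := by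
    intro i hi
    have : 2 ≤ i := le_trans hm2 hi
    exact_mod_cast Nat.lt_of_lt_of_le (by norm_num) this
  have hmono' : (∀ i j : ℕ, m ≤ i → i ≤ j → j ≤ n → R i ≤ R j) ∨
      (∀ i j : ℕ, m ≤ i → i ≤ j → j ≤ n → R j ≤ R i) := by
    rcases hRmono with h | h
    · left; intro i j hi hij _
      exact h (Set.mem_Ioi.mpr (hposcast i hi)) (Set.mem_Ioi.mpr (hposcast j (le_trans hi hij)))
        (by exact_mod_cast hij)
    · right; intro i j hi hij _
      exact h (Set.mem_Ioi.mpr (hposcast i hi)) (Set.mem_Ioi.mpr (hposcast j (le_trans hi hij)))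
        (by exact_mod_cast hij)
  have hRmpos : 0 < R m := hRpos _ hmpos
  have hRnpos : 0 < R n := hRpos _ hnpos
  have hmaxpos : 0 ≤ max (R m) (R n) := le_max_of_le_left (le_of_lt hRmpos)
  have hAbel := abel_bound (fun k : ℕ => R k) (fun k : ℕ => Real.cos (k*θ)) m n hmn
      (1/Real.sin (θ/2)) (by positivity) (fun j => cos_sum_bound θ hsinpos j)
      (le_of_lt hRmpos) (le_of_lt hRnpos) hmono'
  have hnum : |∑ k ∈ Finset.Icc m n, R k * Real.cos (2*π*k*t/(n:ℝ))|
      ≤ max (R m) (R n) * ((n:ℝ)/t) := by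
    rw [hnum_eq]
    calc |∑ k ∈ Finset.Icc m n, R k * Real.cos (k*θ)|
        ≤ 2 * max (R m) (R n) * (1/Real.sin (θ/2)) := hAbel
      _ ≤ 2 * max (R m) (R n) * ((n:ℝ)/(2*t)) := by
          apply mul_le_mul_of_nonneg_left hD
          positivity
      _ = max (R m) (R n) * ((n:ℝ)/t) := by
          field_simp
  have hden_pos : 0 < ∑ k ∈ Finset.Icc 1 n, R k := by
    apply Finset.sum_pos
    · intro k hk
      rw [Finset.mem_Icc] at hk
      exact hRpos k (by exact_mod_cast hk.1)
    · exact ⟨1, Finset.mem_Icc.mpr ⟨le_rfl, by omega⟩⟩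
  -- positivity of L
  have hxa : (0:ℝ) < x ^ (-α) := Real.rpow_pos_of_pos hxpos _
  have hna : (0:ℝ) < (n:ℝ) ^ (-α) := Real.rpow_pos_of_pos hnpos _
  have hLx : 0 < L x := by
    have hpos := hRpos x hxpos
    rw [hL x hxpos] at hpos
    rcases mul_pos_iff.mp hpos with ⟨h1, _⟩ | ⟨_, h2⟩
    · exact h1
    · linarith
  have hLn : 0 < L (n:ℝ) := by
    have hpos := hRpos (n:ℝ) hnpos
    rw [hL (n:ℝ) hnpos] at hpos
    rcases mul_pos_iff.mp hpos with ⟨h1, _⟩ | ⟨_, h2⟩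
    · exact h1
    · linarith
  have hB1 : 0 < t ^ (α-1) * L x / L (n:ℝ) :=
    div_pos (mul_pos (Real.rpow_pos_of_pos htpos _) hLx) hLn
  have hBpos : (0:ℝ) ≤ max (t ^ (α-1) * L x / L (n:ℝ)) (1/t) :=
    le_max_of_le_left (le_of_lt hB1)
  -- key identity
  have hxpow : x ^ (-α) = (n:ℝ) ^ (-α) * t ^ α := by
    rw [hxdef, Real.div_rpow (le_of_lt hnpos) (le_of_lt htpos),
      Real.rpow_neg (le_of_lt htpos), div_eq_mul_inv, inv_inv]
  have htpow : t ^ (α - 1) = t ^ α / t := by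
    rw [Real.rpow_sub htpos, Real.rpow_one]
  have hkey : R x / t = t ^ (α-1) * L x / L (n:ℝ) * R (n:ℝ) := by
    rw [hL x hxpos, hL (n:ℝ) hnpos, hxpow, htpow]
    field_simp [hLn.ne', htpos.ne']
  rw [abs_div, abs_of_pos hden_pos, div_le_iff₀ hden_pos]
  rcases hRmono with hmono | hanti
  · -- monotone case
    have hmaxRn : max (R m) (R n) = R (n:ℝ) :=
      max_eq_right (hmono (Set.mem_Ioi.mpr hmpos) (Set.mem_Ioi.mpr hnpos) hmnR)
    set h : ℕ := ⌈(n:ℝ)/2⌉₊ with hhdef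
    have hh1 : 1 ≤ h := Nat.one_le_ceil_iff.mpr (by positivity)
    have hhn : h ≤ n := by
      calc h ≤ ⌈(n:ℝ)⌉₊ := Nat.ceil_le_ceil (by linarith)
        _ = n := Nat.ceil_natCast n
    have hhlt : (h:ℝ) < (n:ℝ)/2 + 1 := Nat.ceil_lt_add_one (by positivity)
    have hhge : (n:ℝ)/2 ≤ (h:ℝ) := Nat.le_ceil _
    clear_value h
    have hcard : ((n + 1 - h : ℕ) : ℝ) = (n:ℝ) + 1 - (h:ℝ) := by
      rw [Nat.cast_sub (by omega)]
      push_cast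
      ring
    have hterm : ∀ k ∈ Finset.Icc h n, c/2 * R (n:ℝ) ≤ R k := by
      intro k hk
      rw [Finset.mem_Icc] at hk
      have hk1 : (h:ℝ) ≤ (k:ℝ) := by exact_mod_cast hk.1
      have hk2 : (n:ℝ)/2 ≤ (k:ℝ) := le_trans hhge hk1
      have hk0 : (0:ℝ) < (k:ℝ) := lt_of_lt_of_le (by positivity) hk2
      have h1 : R ((n:ℝ)/2) ≤ R k :=
        hmono (Set.mem_Ioi.mpr (by positivity)) (Set.mem_Ioi.mpr hk0) hk2
      exact le_trans (hRVtail (n:ℝ) hnX₀).1 h1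
    have hden : (n:ℝ)/2 * (c/2 * R (n:ℝ)) ≤ ∑ k ∈ Finset.Icc 1 n, R k := by
      calc (n:ℝ)/2 * (c/2 * R (n:ℝ))
          ≤ ((n + 1 - h : ℕ):ℝ) * (c/2 * R (n:ℝ)) := by
            apply mul_le_mul_of_nonneg_right _ (by positivity)
            rw [hcard]; linarith
        _ = ∑ _k ∈ Finset.Icc h n, (c/2 * R (n:ℝ)) := by
            rw [Finset.sum_const, Nat.card_Icc, nsmul_eq_mul]
        _ ≤ ∑ k ∈ Finset.Icc h n, R k := Finset.sum_le_sum hterm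
        _ ≤ ∑ k ∈ Finset.Icc 1 n, R k := by
            apply Finset.sum_le_sum_of_subset_of_nonneg (Finset.Icc_subset_Icc hh1 le_rfl)
            intro k hk _
            rw [Finset.mem_Icc] at hk
            exact le_of_lt (hRpos k (by exact_mod_cast hk.1))
    calc |∑ k ∈ Finset.Icc m n, R k * Real.cos (2*π*k*t/(n:ℝ))|
        ≤ max (R m) (R n) * ((n:ℝ)/t) := hnum
      _ = R (n:ℝ) * ((n:ℝ)/t) := by rw [hmaxRn]
      _ = 4/c * (1/t) * ((n:ℝ)/2 * (c/2 * R (n:ℝ))) := by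
          field_simp [hc.ne', htpos.ne']
          ring
      _ ≤ 4/c * (1/t) * (∑ k ∈ Finset.Icc 1 n, R k) := by
          apply mul_le_mul_of_nonneg_left hden
          positivity
      _ ≤ (K + 4/c + 1) * max (t ^ (α-1) * L x / L (n:ℝ)) (1/t) *
            (∑ k ∈ Finset.Icc 1 n, R k) := by
          apply mul_le_mul_of_nonneg_right _ (le_of_lt hden_pos)
          apply mul_le_mul (by linarith) (le_max_right _ _) (by positivity) (by linarith)
  · -- antitone case
    have hmaxRm : max (R m) (R n) = R (m:ℝ) :=
      max_eq_left (hanti (Set.mem_Ioi.mpr hmpos) (Set.mem_Ioi.mpr hnpos) hmnR)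
    have hRmx : R (m:ℝ) ≤ R (x/2) :=
      hanti (Set.mem_Ioi.mpr (by positivity)) (Set.mem_Ioi.mpr hmpos) hxm
    have hxK : R (x/2) ≤ K * R x := by
      rcases le_or_gt X₀ x with hcase | hcase
      · calc R (x/2) ≤ 2*c * R x := (hRVtail x hcase).2
          _ ≤ K * R x := by
              apply mul_le_mul_of_nonneg_right _ (le_of_lt (hRpos x hxpos))
              rw [hKdef]
              have : 0 < R 1 / R X₀ := by positivity
              linarith
      · have h1 : R (x/2) ≤ R 1 :=
          hanti (Set.mem_Ioi.mpr one_pos) (Set.mem_Ioi.mpr (by positivity)) (by linarith)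
        have h2 : R X₀ ≤ R x := hanti (Set.mem_Ioi.mpr hxpos) (Set.mem_Ioi.mpr hX₀pos)
          (le_of_lt hcase)
        calc R (x/2) ≤ R 1 := h1
          _ = R 1 / R X₀ * R X₀ := by field_simp
          _ ≤ R 1 / R X₀ * R x := mul_le_mul_of_nonneg_left h2 (by positivity)
          _ ≤ K * R x := by
              apply mul_le_mul_of_nonneg_right _ (le_of_lt (hRpos x hxpos))
              rw [hKdef]
              linarith
    have hdenn : (n:ℝ) * R (n:ℝ) ≤ ∑ k ∈ Finset.Icc 1 n, R k := by
      have hcard1 : (Finset.Icc 1 n).card = n := by rw [Nat.card_Icc]; omega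
      calc (n:ℝ) * R (n:ℝ) = ∑ _k ∈ Finset.Icc 1 n, R (n:ℝ) := by
            rw [Finset.sum_const, hcard1, nsmul_eq_mul]
        _ ≤ ∑ k ∈ Finset.Icc 1 n, R k := by
            apply Finset.sum_le_sum
            intro k hk
            rw [Finset.mem_Icc] at hk
            have hk0 : (0:ℝ) < (k:ℝ) := by exact_mod_cast hk.1
            exact hanti (Set.mem_Ioi.mpr hk0) (Set.mem_Ioi.mpr hnpos) (by exact_mod_cast hk.2)
    calc |∑ k ∈ Finset.Icc m n, R k * Real.cos (2*π*k*t/(n:ℝ))|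
        ≤ max (R m) (R n) * ((n:ℝ)/t) := hnum
      _ = R (m:ℝ) * ((n:ℝ)/t) := by rw [hmaxRm]
      _ ≤ K * R x * ((n:ℝ)/t) := by
          apply mul_le_mul_of_nonneg_right (le_trans hRmx hxK)
          positivity
      _ = K * (R x / t) * (n:ℝ) := by ring
      _ = K * (t ^ (α-1) * L x / L (n:ℝ)) * ((n:ℝ) * R (n:ℝ)) := by rw [hkey]; ring
      _ ≤ K * (t ^ (α-1) * L x / L (n:ℝ)) * (∑ k ∈ Finset.Icc 1 n, R k) := by
          apply mul_le_mul_of_nonneg_left hdenn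
          positivity
      _ ≤ (K + 4/c + 1) * max (t ^ (α-1) * L x / L (n:ℝ)) (1/t) *
            (∑ k ∈ Finset.Icc 1 n, R k) := by
          apply mul_le_mul_of_nonneg_right _ (le_of_lt hden_pos)
          apply mul_le_mul (by linarith) (le_max_left _ _) (le_of_lt hB1) (by linarith)
end
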